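/- arXiv:2312.01116 — 2 statements merged into one kernel-verified Lean document; each statement's English description precedes it below -/
import Mathlib

section
/- Let A be a nontrivial closed class of decision tables from M_2^∞, ψ a bounded complexity measure, n ∈ ℕ, T ∈ A_ψ(n), and G(T) > 0. Then there exists a decision table T* ∈ [T] such that ψ^a(T*) ≤ n and ψ^d(T*) ≥ G(T) − 1. -/
open Classical

noncomputable section

/-- A decision table with many-valued decisions over `E_k = {0,…,k-1}`.
Columns are labeled with attributes `f_i` identified with their indices `i : ℕ`;
a row is a function `ℕ → ℕ` supported on the attribute set, with values `< k`;
each row is labeled with a nonempty finite set of decisions. -/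
structure Table (k : ℕ) where
  attrs : Finset ℕ
  rows : Finset (ℕ → ℕ)
  dec : (ℕ → ℕ) → Finset ℕ
  rows_mem : ∀ r ∈ rows, (∀ i ∈ attrs, r i < k) ∧ (∀ i ∉ attrs, r i = 0)
  dec_nonempty : ∀ r ∈ rows, (dec r).Nonempty

namespace Table

variable {k : ℕ}

/-- a row satisfies a word (a list of (attribute, value) pairs) -/
def rowSat (r : ℕ → ℕ) (α : List (ℕ × ℕ)) : Prop := ∀ q ∈ α, r q.1 = q.2

/-- the word belongs to `Ω_k(T)` -/
def wordOk (T : Table k) (α : List (ℕ × ℕ)) : Prop := ∀ q ∈ α, q.1 ∈ T.attrs ∧ q.2 < k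

/-- the subtable `Tα` -/
def applyWord (T : Table k) (α : List (ℕ × ℕ)) : Table k where
  attrs := T.attrs
  rows := T.rows.filter (fun r => rowSat r α)
  dec := T.dec
  rows_mem := fun r hr => T.rows_mem r (Finset.mem_filter.mp hr).1
  dec_nonempty := fun r hr => T.dec_nonempty r (Finset.mem_filter.mp hr).1

/-- `T ∈ M_k^{∞c}` : the table has a common decision -/
def hasCommon (T : Table k) : Prop := ∃ d : ℕ, ∀ r ∈ T.rows, d ∈ T.dec r

/-- `N(T)` : number of rows -/
def NT (T : Table k) : ℕ := T.rows.card

/-- `W(T)` : number of columns (`0` for the empty table `Λ`) -/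
def WT (T : Table k) : ℕ := if T.rows = ∅ then 0 else T.attrs.card

/-- the closure `[T]` of `T` under removal of columns and changing of decisions:
`Q = J(ν, I(D,T))` for some `D ⊆ At(T)` and some `ν` (the decision labeling of `Q`
on its rows is arbitrary, i.e. is the arbitrary `ν` with nonempty finite values). -/
def closureT (T : Table k) : Set (Table k) :=
  {Q | ∃ D : Finset ℕ, D ⊆ T.attrs ∧ Q.attrs = T.attrs \ D ∧
      Q.rows = T.rows.image (fun r i => if i ∈ T.attrs \ D then r i else 0)}

end Table

/-- a closed class: `[A] = A` -/
def IsClosedClass {k : ℕ} (A : Set (Table k)) : Prop := ∀ T ∈ A, Table.closureT T ⊆ A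

/-- a nontrivial class: contains nonempty tables -/
def NontrivialClass {k : ℕ} (A : Set (Table k)) : Prop := ∃ T ∈ A, T.rows.Nonempty

/-- the part of a `k`-decision tree below one edge leaving the root -/
inductive DTree (k : ℕ) : Type
  | leaf (d : ℕ) : DTree k
  | node (a : ℕ) (n : ℕ) (lab : Fin (n + 1) → ℕ) (ch : Fin (n + 1) → DTree k) : DTree k

namespace DTree

variable {k : ℕ}

/-- the set of pairs (π(τ), terminal decision) over complete paths τ -/
def paths : DTree k → Set (List (ℕ × ℕ) × ℕ)
  | leaf d => {([], d)}
  | node a _ lab ch =>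
      ⋃ i, (fun p : List (ℕ × ℕ) × ℕ => ((a, lab i) :: p.1, p.2)) '' paths (ch i)

/-- edge labels belong to `E_k` -/
def wf : DTree k → Prop
  | leaf _ => True
  | node _ _ lab ch => (∀ i, lab i < k) ∧ ∀ i, wf (ch i)

/-- edges leaving any node are labeled with pairwise different numbers -/
def det : DTree k → Prop
  | leaf _ => True
  | node _ _ lab ch => Function.Injective lab ∧ ∀ i, det (ch i)

/-- the set of attributes attached to nodes -/
def attrs : DTree k → Finset ℕ
  | leaf _ => ∅
  | node a _ _ ch => insert a (Finset.univ.biUnion fun i => attrs (ch i))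

end DTree

/-- a `k`-decision tree: an unlabeled root with `n+1` unlabeled edges leaving it -/
structure KTree (k : ℕ) where
  n : ℕ
  sub : Fin (n + 1) → DTree k

namespace KTree

variable {k : ℕ}

def paths (Γ : KTree k) : Set (List (ℕ × ℕ) × ℕ) := ⋃ i, (Γ.sub i).paths

def wf (Γ : KTree k) : Prop := ∀ i, (Γ.sub i).wf

def attrs (Γ : KTree k) : Finset ℕ := Finset.univ.biUnion fun i => (Γ.sub i).attrs

end KTree

/-- partially bounded complexity measure on words over `P` -/
structure PBCM where
  toFun : List ℕ → ℕ
  pos : ∀ α, toFun α = 0 ↔ α = []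
  perm : ∀ α β, List.Perm α β → toFun α = toFun β
  mono : ∀ α β, toFun α ≤ toFun (α ++ β)
  subadd : ∀ α β, toFun (α ++ β) ≤ toFun α + toFun β

/-- bounded complexity measure -/
structure BCM extends PBCM where
  bdd : ∀ α, α.length ≤ toFun α

/-- extension of ψ to words over pairs `(f_i, δ)` -/
def PBCM.onWord (ψ : PBCM) (α : List (ℕ × ℕ)) : ℕ := ψ.toFun (α.map Prod.fst)

/-- extension of ψ to finite sets of attributes -/
def PBCM.onSet (ψ : PBCM) (s : Finset ℕ) : ℕ := ψ.toFun (s.sort (· ≤ ·))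

/-- the depth `h` -/
def depthCM : BCM where
  toFun := List.length
  pos := fun α => List.length_eq_zero_iff
  perm := fun _ _ h => h.length_eq
  mono := fun α β => by simp
  subadd := fun α β => by simp
  bdd := fun _ => le_rfl

/-- `ψ(Γ)` : complexity of a decision tree -/
def treeComp {k : ℕ} (ψ : PBCM) (Γ : KTree k) : ℕ :=
  sSup {c | ∃ p ∈ Γ.paths, ψ.onWord p.1 = c}

/-- `Γ` is a nondeterministic decision tree for the (nonempty) table `T` -/
def isNDT {k : ℕ} (T : Table k) (Γ : KTree k) : Prop :=
  T.rows.Nonempty ∧ Γ.wf ∧ Γ.attrs ⊆ T.attrs ∧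
  (∀ r ∈ T.rows, ∃ p ∈ Γ.paths, Table.rowSat r p.1) ∧
  (∀ p ∈ Γ.paths, (T.applyWord p.1).rows = ∅ ∨ ∀ r ∈ (T.applyWord p.1).rows, p.2 ∈ T.dec r)

/-- `Γ` is a deterministic decision tree for `T` -/
def isDDT {k : ℕ} (T : Table k) (Γ : KTree k) : Prop :=
  isNDT T Γ ∧ Γ.n = 0 ∧ ∀ i, (Γ.sub i).det

/-- `ψ^a(T)` -/
def psiA {k : ℕ} (ψ : PBCM) (T : Table k) : ℕ :=
  sInf {c | ∃ Γ : KTree k, isNDT T Γ ∧ treeComp ψ Γ = c}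

/-- `ψ^d(T)` -/
def psiD {k : ℕ} (ψ : PBCM) (T : Table k) : ℕ :=
  sInf {c | ∃ Γ : KTree k, isDDT T Γ ∧ treeComp ψ Γ = c}

/-- `m_ψ(T)` -/
def mpsi {k : ℕ} (ψ : PBCM) (T : Table k) : ℕ :=
  if T.rows = ∅ then 0 else T.attrs.sup fun i => ψ.toFun [i]

/-- `W_ψ(T)` -/
def Wpsi {k : ℕ} (ψ : PBCM) (T : Table k) : ℕ :=
  if T.rows = ∅ then 0 else ψ.onSet T.attrs

/-- a tuple `δ̄ ∈ E_k^{|At(T)|}` -/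
def validTuple {k : ℕ} (T : Table k) (δ : ℕ → ℕ) : Prop :=
  (∀ i ∈ T.attrs, δ i < k) ∧ ∀ i ∉ T.attrs, δ i = 0

/-- `M_ψ(T, δ̄)` -/
def MpsiAt {k : ℕ} (ψ : PBCM) (T : Table k) (δ : ℕ → ℕ) : ℕ :=
  sInf {p | ∃ s : Finset ℕ, s ⊆ T.attrs ∧
    (T.applyWord ((s.sort (· ≤ ·)).map fun i => (i, δ i))).hasCommon ∧ ψ.onSet s = p}

/-- `M_ψ(T)` -/
def Mpsi {k : ℕ} (ψ : PBCM) (T : Table k) : ℕ :=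
  if T.hasCommon then 0 else sSup {p | ∃ δ, validTuple T δ ∧ MpsiAt ψ T δ = p}

/-- `U` is a `(ψ,n)`-cover of `T` -/
def isCover {k : ℕ} (ψ : PBCM) (n : ℕ) (T : Table k) (U : Finset (List (ℕ × ℕ))) : Prop :=
  (∀ α ∈ U, T.wordOk α ∧ ψ.onWord α ≤ n) ∧ ∀ r ∈ T.rows, ∃ α ∈ U, Table.rowSat r α

/-- `U` is an irreducible `(ψ,n)`-cover of `T` -/
def isIrredCover {k : ℕ} (ψ : PBCM) (n : ℕ) (T : Table k) (U : Finset (List (ℕ × ℕ))) : Prop :=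
  isCover ψ n T U ∧ ∀ V ⊂ U, ¬ isCover ψ n T V

/-- `l_ψ(T,n)` : maximum cardinality of an irreducible `(ψ,n)`-cover -/
def lpsi {k : ℕ} (ψ : PBCM) (T : Table k) (n : ℕ) : ℕ :=
  sSup {c | ∃ U, isIrredCover ψ n T U ∧ U.card = c}

/-- the set `{ψ^d(T) : T ∈ A, ψ^a(T) ≤ n}`; `H^∞_{ψ,A}(n)` is defined iff this set
is finite, and is then its maximum -/
def HSet {k : ℕ} (ψ : PBCM) (A : Set (Table k)) (n : ℕ) : Set ℕ :=
  {c | ∃ T ∈ A, psiA ψ T ≤ n ∧ psiD ψ T = c}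

/-- `H^∞_{ψ,A}(n)` (as the max = sSup of the finite set `HSet ψ A n`) -/
def Hfun {k : ℕ} (ψ : PBCM) (A : Set (Table k)) (n : ℕ) : ℕ := sSup (HSet ψ A n)

/-- the set `{l_ψ(T,n) : T ∈ A}` -/
def LSet {k : ℕ} (ψ : PBCM) (A : Set (Table k)) (n : ℕ) : Set ℕ :=
  {c | ∃ T ∈ A, lpsi ψ T n = c}

/-- `L_{ψ,A}(n)` -/
def Lfun {k : ℕ} (ψ : PBCM) (A : Set (Table k)) (n : ℕ) : ℕ := sSup (LSet ψ A n)

/-- `H_D` for an infinite `D ⊆ ℕ` : `H_D(n)` is the largest element of `D` that is `≤ n`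
(and `0` if there is none) -/
def HDfun (D : Set ℕ) (n : ℕ) : ℕ := sSup {d | d ∈ D ∧ d ≤ n}

/-- a complete table from `M_2^∞` -/
def isComplete (Q : Table 2) : Prop := Q.NT = 2 ^ Q.attrs.card

/-- `Z(T)` : maximum number of columns in a complete table from `[T]` (`0` if none) -/
def Zt (T : Table 2) : ℕ := sSup {c | ∃ Q ∈ Table.closureT T, isComplete Q ∧ Q.WT = c}

/-- the set `{Z(T) : T ∈ A_ψ(n)}` -/
def ZSet (ψ : PBCM) (A : Set (Table 2)) (n : ℕ) : Set ℕ :=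
  {c | ∃ T ∈ A, mpsi ψ T ≤ n ∧ Zt T = c}

/-- `Z_{ψ,A}(n)` -/
def Zfun (ψ : PBCM) (A : Set (Table 2)) (n : ℕ) : ℕ := sSup (ZSet ψ A n)

/-- annihilating word for `T` -/
def isAnnih (T : Table 2) (α : List (ℕ × ℕ)) : Prop :=
  T.wordOk α ∧ (∀ p ∈ α, ∀ q ∈ α, p.1 = q.1 → p.2 = q.2) ∧ (T.applyWord α).rows = ∅

/-- irreducible annihilating word for `T` -/
def isIrredAnnih (T : Table 2) (α : List (ℕ × ℕ)) : Prop :=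
  isAnnih T α ∧ ∀ β, β.Sublist α → β ≠ α → ¬ isAnnih T β

/-- `G(T)` : maximum length of an irreducible annihilating word (`0` if none) -/
def Gt (T : Table 2) : ℕ := sSup {c | ∃ α, isIrredAnnih T α ∧ α.length = c}

/-- the set `{G(T) : T ∈ A_ψ(n)}` -/
def GSet (ψ : PBCM) (A : Set (Table 2)) (n : ℕ) : Set ℕ :=
  {c | ∃ T ∈ A, mpsi ψ T ≤ n ∧ Gt T = c}

/-- `G_{ψ,A}(n)` -/
def Gfun (ψ : PBCM) (A : Set (Table 2)) (n : ℕ) : ℕ := sSup (GSet ψ A n)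

/-! ### The tables `T_k` and `T_k^*` built from the triangle-shaped graph `G_k` -/

/-- `m(k) = k(k+1)/2` : number of nodes of `G_k` -/
def mnum (k : ℕ) : ℕ := k * (k + 1) / 2

/-- the layer of node `i` of `G_k` : the unique `L` with `m(L-1) < i ≤ m(L)` -/
def layer (i : ℕ) : ℕ := sInf {L | i ≤ mnum L}

/-- left child `l(i) = i + layer i`; right child `p(i) = i + layer i + 1` -/
def lchild (i : ℕ) : ℕ := i + layer i

def rchild (i : ℕ) : ℕ := i + layer i + 1

/-- the map `ν_k : E_2^{m(k)} → P(ω)` -/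
def nuk (k : ℕ) (δ : ℕ → ℕ) : Finset ℕ :=
  (Finset.range (mnum k + 1)).filter fun i =>
    if i = 0 then δ 1 = 0
    else if layer i = k then δ i = 1
    else δ i = 1 ∧ δ (lchild i) = 0 ∧ δ (rchild i) = 0

/-- all tuples over `E_k` supported on the attribute set `s` -/
def allRows (k : ℕ) (s : Finset ℕ) : Finset (ℕ → ℕ) :=
  (s.pi fun _ => Finset.range k).image fun f i => if h : i ∈ s then f i h else 0

/-- the table with attribute set `s`, all possible rows, and decision labeling `d` -/
def fullTable (k : ℕ) (s : Finset ℕ) (d : (ℕ → ℕ) → Finset ℕ) : Table k where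
  attrs := s
  rows := allRows k s
  dec := fun r => if (d r).Nonempty then d r else {0}
  rows_mem := by
    intro r hr
    simp only [allRows, Finset.mem_image] at hr
    obtain ⟨f, hf, rfl⟩ := hr
    refine ⟨fun i hi => ?_, fun i hi => ?_⟩
    · have h := (Finset.mem_pi.mp hf) i hi
      simp only [Finset.mem_range] at h
      simpa [hi] using h
    · simp [hi]
  dec_nonempty := by
    intro r _
    by_cases h : (d r).Nonempty
    · simp [h]
    · simp [h]

/-- the complete table `T_k` with `m(k)` columns `f_1, …, f_{m(k)}` and `2^{m(k)}` rows,
each row `δ̄` labeled with `ν_k(δ̄)` (which is always nonempty) -/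
def Tk (k : ℕ) : Table 2 := fullTable 2 (Finset.Icc 1 (mnum k)) (nuk k)

/-- the `j`-th node of the complete path of `G_k` determined by the choices `c` -/
def pathNode (c : ℕ → Bool) : ℕ → ℕ
  | 0 => 1
  | j + 1 => if c j then lchild (pathNode c j) else rchild (pathNode c j)

/-- `T_k^*` : the subtable of `T_k` whose rows are exactly the characteristic tuples
of complete paths of `G_k` -/
def Tstar (k : ℕ) : Table 2 where
  attrs := (Tk k).attrs
  rows := (Tk k).rows.filter fun r =>
    ∃ c : ℕ → Bool, ∀ i ∈ Finset.Icc 1 (mnum k), (r i = 1 ↔ ∃ j < k, pathNode c j = i)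
  dec := (Tk k).dec
  rows_mem := fun r hr => (Tk k).rows_mem r (Finset.mem_filter.mp hr).1
  dec_nonempty := fun r hr => (Tk k).dec_nonempty r (Finset.mem_filter.mp hr).1

/-- `r(T)` for a subtable `T` of `T_k^*` : the number of distinct decision sets
`ν_k(δ̄)` among the rows `δ̄` of `T` -/
def rnum (k : ℕ) (T : Table 2) : ℕ := (T.rows.image (nuk k)).card

end

section AuxLemmas
open Classical

variable {k : ℕ}

lemma rowSat_nil (r : ℕ → ℕ) : Table.rowSat r ([] : List (ℕ×ℕ)) := by
  intro q hq; simp at hq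

lemma rowSat_cons {r : ℕ → ℕ} {q : ℕ × ℕ} {w : List (ℕ×ℕ)} :
    Table.rowSat r (q :: w) ↔ r q.1 = q.2 ∧ Table.rowSat r w := by
  simp [Table.rowSat]

lemma DTree.paths_nonempty (t : DTree k) : t.paths.Nonempty := by
  induction t with
  | leaf d => exact ⟨([], d), rfl⟩
  | node a n lab ch ih =>
    obtain ⟨p, hp⟩ := ih 0
    exact ⟨((a, lab 0) :: p.1, p.2), Set.mem_iUnion.mpr ⟨0, ⟨p, hp, rfl⟩⟩⟩

lemma DTree.paths_finite (t : DTree k) : t.paths.Finite := by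
  induction t with
  | leaf d => exact Set.finite_singleton _
  | node a n lab ch ih => exact Set.finite_iUnion (fun i => (ih i).image _)

lemma KTree.paths_finite (Γ : KTree k) : Γ.paths.Finite :=
  Set.finite_iUnion fun i => (Γ.sub i).paths_finite

lemma KTree.paths_nonempty (Γ : KTree k) : Γ.paths.Nonempty := by
  obtain ⟨p, hp⟩ := (Γ.sub 0).paths_nonempty
  exact ⟨p, Set.mem_iUnion.mpr ⟨0, hp⟩⟩

lemma le_treeComp (ψ : PBCM) (Γ : KTree k) {p : List (ℕ × ℕ) × ℕ} (hp : p ∈ Γ.paths) :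
    ψ.onWord p.1 ≤ treeComp ψ Γ := by
  have he : {c | ∃ p ∈ Γ.paths, ψ.onWord p.1 = c} = (fun p => ψ.onWord p.1) '' Γ.paths := by
    ext c; simp [eq_comm]
  refine le_csSup ?_ ⟨p, hp, rfl⟩
  rw [he]; exact (Γ.paths_finite.image _).bddAbove

lemma treeComp_le (ψ : PBCM) (Γ : KTree k) {n : ℕ} (h : ∀ p ∈ Γ.paths, ψ.onWord p.1 ≤ n) :
    treeComp ψ Γ ≤ n := by
  obtain ⟨p, hp⟩ := Γ.paths_nonempty
  refine csSup_le ⟨_, p, hp, rfl⟩ ?_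
  rintro c ⟨q, hq, rfl⟩; exact h q hq

end AuxLemmas
section Walk
open Classical

lemma mem_paths_node {k : ℕ} {a nn : ℕ} {lab : Fin (nn+1) → ℕ} {ch : Fin (nn+1) → DTree k}
    {p : List (ℕ × ℕ) × ℕ} :
    p ∈ (DTree.node a nn lab ch).paths ↔
      ∃ i, ∃ x ∈ (ch i).paths, ((a, lab i) :: x.1, x.2) = p := by
  simp [DTree.paths]

lemma walk_lemma (A V : ℕ → ℕ) (m : ℕ) (ρ : ℕ → ℕ → ℕ)
    (hAinj : ∀ l < m, ∀ l' < m, A l = A l' → l = l')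
    (hval : ∀ j < m, ∀ l < m, l ≠ j → ρ j (A l) = V l)
    (hout : ∀ j < m, ∀ a, (∀ l < m, A l ≠ a) → ρ j a = 0) :
    ∀ (t : DTree 2), t.det → ∀ (F : Finset ℕ), (∀ j ∈ F, j < m) →
    (∀ j ∈ F, ∃ p ∈ t.paths, Table.rowSat (ρ j) p.1) →
    (∀ p ∈ t.paths, ∀ j ∈ F, Table.rowSat (ρ j) p.1 → p.2 = j) →
    ∃ p ∈ t.paths, ∀ j ∈ F, j = p.2 ∨ ∃ q ∈ p.1, q.1 = A j := by
  intro t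
  induction t with
  | leaf d =>
    intro _ F hFm C1 C2
    refine ⟨([], d), rfl, fun j hj => Or.inl ?_⟩
    exact (C2 ([], d) rfl j hj (rowSat_nil _)).symm
  | node a nn lab ch ih =>
    intro hdet F hFm C1 C2
    by_cases h2 : ∃ j0 ∈ F, ∃ j1 ∈ F, j0 ≠ j1
    · obtain ⟨j0, hj0, j1, hj1, hne01⟩ := h2
      set F' := F.filter (fun l => A l ≠ a) with hF'def
      have hsub : F' ⊆ F := Finset.filter_subset _ _
      have hsame : ∀ j ∈ F', ∀ j' ∈ F', ρ j a = ρ j' a := by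
        intro j hj j' hj'
        by_cases hex : ∃ l, l < m ∧ A l = a
        · obtain ⟨l, hl, hla⟩ := hex
          have h1 : l ≠ j := fun h => (Finset.mem_filter.mp hj).2 (h ▸ hla)
          have h2' : l ≠ j' := fun h => (Finset.mem_filter.mp hj').2 (h ▸ hla)
          rw [← hla, hval j (hFm j (hsub hj)) l hl h1, hval j' (hFm j' (hsub hj')) l hl h2']
        · push_neg at hex
          rw [hout j (hFm j (hsub hj)) a hex, hout j' (hFm j' (hsub hj')) a hex]
      have hF'ne : F'.Nonempty := by
        by_cases h0 : A j0 = a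
        · refine ⟨j1, Finset.mem_filter.mpr ⟨hj1, fun h1 => ?_⟩⟩
          exact hne01 (hAinj j0 (hFm _ hj0) j1 (hFm _ hj1) (h0.trans h1.symm))
        · exact ⟨j0, Finset.mem_filter.mpr ⟨hj0, h0⟩⟩
      obtain ⟨j2, hj2⟩ := hF'ne
      obtain ⟨p, hp, hsat⟩ := C1 j2 (hsub hj2)
      obtain ⟨i, x, hx, hpx⟩ := mem_paths_node.mp hp
      have hlabi : lab i = ρ j2 a := by
        have := hsat (a, lab i) (by rw [← hpx]; exact List.mem_cons_self)
        exact this.symm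
      -- apply IH to ch i with F'
      have C1' : ∀ j ∈ F', ∃ p' ∈ (ch i).paths, Table.rowSat (ρ j) p'.1 := by
        intro j hj
        obtain ⟨p', hp', hsat'⟩ := C1 j (hsub hj)
        obtain ⟨i', x', hx', hpx'⟩ := mem_paths_node.mp hp'
        have hlabi' : lab i' = ρ j a := by
          have := hsat' (a, lab i') (by rw [← hpx']; exact List.mem_cons_self)
          exact this.symm
        have : i' = i := by
          apply hdet.1
          rw [hlabi', hlabi, hsame j hj j2 hj2]
        subst this
        refine ⟨x', hx', ?_⟩
        intro q hq
        exact hsat' q (by rw [← hpx']; exact List.mem_cons_of_mem _ hq)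
      have C2' : ∀ p' ∈ (ch i).paths, ∀ j ∈ F', Table.rowSat (ρ j) p'.1 → p'.2 = j := by
        intro p' hp' j hj hsat'
        have hmem : ((a, lab i) :: p'.1, p'.2) ∈ (DTree.node a nn lab ch).paths :=
          mem_paths_node.mpr ⟨i, p', hp', rfl⟩
        refine C2 _ hmem j (hsub hj) ?_
        intro q hq
        rcases List.mem_cons.mp hq with h | h
        · subst h; rw [hlabi, hsame j hj j2 hj2]
        · exact hsat' q h
      obtain ⟨p', hp', hconc⟩ := ih i (hdet.2 i) F' (fun j hj => hFm j (hsub hj)) C1' C2'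
      refine ⟨((a, lab i) :: p'.1, p'.2), mem_paths_node.mpr ⟨i, p', hp', rfl⟩, ?_⟩
      intro j hj
      by_cases hAj : A j = a
      · exact Or.inr ⟨(a, lab i), List.mem_cons_self, hAj.symm⟩
      · rcases hconc j (Finset.mem_filter.mpr ⟨hj, hAj⟩) with h | ⟨q, hq, hq1⟩
        · exact Or.inl h
        · exact Or.inr ⟨q, List.mem_cons_of_mem _ hq, hq1⟩
    · push_neg at h2
      by_cases hFne : F.Nonempty
      · obtain ⟨j, hj⟩ := hFne
        obtain ⟨p, hp, hsat⟩ := C1 j hj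
        have hpj := C2 p hp j hj hsat
        refine ⟨p, hp, fun j' hj' => Or.inl ?_⟩
        rw [h2 j' hj' j hj]
        exact hpj.symm
      · obtain ⟨p, hp⟩ := (DTree.node a nn lab ch).paths_nonempty
        refine ⟨p, hp, fun j hj => absurd ⟨j, hj⟩ hFne⟩
section FullDT
open Classical

noncomputable def chooseDec (T' : Table 2) (w : List (ℕ × ℕ)) : ℕ :=
  if h : ((T'.applyWord w).rows).Nonempty then
    (T'.dec h.choose).min' (T'.dec_nonempty _ (Finset.mem_filter.mp h.choose_spec).1)
  else 0

lemma chooseDec_mem (T' : Table 2) (w : List (ℕ × ℕ)) {ρ : ℕ → ℕ}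
    (hρ : ρ ∈ (T'.applyWord w).rows)
    (huniq : ∀ ρ' ∈ (T'.applyWord w).rows, ρ' = ρ) : chooseDec T' w ∈ T'.dec ρ := by
  have h : ((T'.applyWord w).rows).Nonempty := ⟨ρ, hρ⟩
  rw [chooseDec, dif_pos h]
  have h2 := huniq _ h.choose_spec
  subst h2
  exact Finset.min'_mem _ _

noncomputable def fullDT (g : List (ℕ × ℕ) → ℕ) : List ℕ → List (ℕ × ℕ) → DTree 2
  | [], w => .leaf (g w)
  | a :: rest, w => .node a 1 (fun i => (i : ℕ)) (fun i => fullDT g rest ((a, (i : ℕ)) :: w))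

lemma fullDT_wf (g : List (ℕ × ℕ) → ℕ) : ∀ (l : List ℕ) (w : List (ℕ × ℕ)), (fullDT g l w).wf := by
  intro l
  induction l with
  | nil => intro w; trivial
  | cons a rest ih => exact fun w => ⟨fun i => i.isLt, fun i => ih _⟩

lemma fullDT_det (g : List (ℕ × ℕ) → ℕ) : ∀ (l : List ℕ) (w : List (ℕ × ℕ)), (fullDT g l w).det := by
  intro l
  induction l with
  | nil => intro w; trivial
  | cons a rest ih => exact fun w => ⟨fun i j h => Fin.val_injective h, fun i => ih _⟩

lemma fullDT_attrs (g : List (ℕ × ℕ) → ℕ) : ∀ (l : List ℕ) (w : List (ℕ × ℕ)),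
    (fullDT g l w).attrs ⊆ l.toFinset := by
  intro l
  induction l with
  | nil => intro w; simp [fullDT, DTree.attrs]
  | cons a rest ih =>
    intro w
    simp only [fullDT, DTree.attrs, List.toFinset_cons]
    exact Finset.insert_subset_insert a (Finset.biUnion_subset.mpr fun i _ => ih _)

lemma fullDT_paths (g : List (ℕ × ℕ) → ℕ) : ∀ (l : List ℕ) (w : List (ℕ × ℕ)) (p),
    p ∈ (fullDT g l w).paths ↔
      ∃ u : List (ℕ × ℕ), u.map Prod.fst = l ∧ (∀ q ∈ u, q.2 < 2) ∧
        p = (u, g (u.reverse ++ w)) := by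
  intro l
  induction l with
  | nil =>
    intro w p
    constructor
    · intro hp
      refine ⟨[], rfl, by simp, ?_⟩
      simpa [fullDT, DTree.paths] using hp
    · rintro ⟨u, hu, _, rfl⟩
      rw [List.map_eq_nil_iff] at hu
      subst hu
      simp [fullDT, DTree.paths]
  | cons a rest ih =>
    intro w p
    rw [show fullDT g (a :: rest) w =
      .node a 1 (fun i => (i : ℕ)) (fun i => fullDT g rest ((a, (i : ℕ)) :: w)) from rfl,
      mem_paths_node]
    constructor
    · rintro ⟨i, x, hx, rfl⟩
      obtain ⟨u, hmap, hvals, rfl⟩ := (ih _ x).mp hx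
      refine ⟨(a, (i : ℕ)) :: u, by simp [hmap], ?_, ?_⟩
      · rintro q hq
        rcases List.mem_cons.mp hq with rfl | hq
        · exact i.isLt
        · exact hvals q hq
      · simp [List.reverse_cons, List.append_assoc]
    · rintro ⟨u, hmap, hvals, rfl⟩
      cases u with
      | nil => simp at hmap
      | cons q u' =>
        simp only [List.map_cons, List.cons.injEq] at hmap
        obtain ⟨hq1, hmap'⟩ := hmap
        refine ⟨⟨q.2, hvals q (List.mem_cons_self)⟩,
          (u', g (u'.reverse ++ ((a, q.2) :: w))), ?_, ?_⟩
        · exact (ih _ _).mpr ⟨u', hmap', fun q' hq' => hvals q' (List.mem_cons_of_mem _ hq'), rfl⟩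
        · obtain ⟨q1, q2⟩ := q
          simp only at hq1
          subst hq1
          simp [List.reverse_cons, List.append_assoc]

end FullDT
section Annih
open Classical

lemma annih_rows_empty_iff {T : Table 2} {α : List (ℕ × ℕ)} :
    (T.applyWord α).rows = ∅ ↔ ∀ r ∈ T.rows, ¬ Table.rowSat r α := by
  simp only [Table.applyWord]
  exact Finset.filter_eq_empty_iff

lemma two_sublist_decomp {β : Type*} {q : β} : ∀ {α : List β}, [q,q].Sublist α →
    ∃ s t, α = s ++ q :: t ∧ q ∈ t := by
  intro α h
  induction α with
  | nil => simp at h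
  | cons a α' ih =>
    cases h with
    | cons _ h' =>
      obtain ⟨s, t, rfl, hm⟩ := ih h'
      exact ⟨a :: s, t, rfl, hm⟩
    | cons_cons _ h' =>
      exact ⟨[], α', rfl, List.singleton_sublist.mp h'⟩

lemma irred_nodup_fst {T : Table 2} {α : List (ℕ × ℕ)} (h : isIrredAnnih T α) :
    (α.map Prod.fst).Nodup := by
  by_contra hnd
  obtain ⟨x, hdup⟩ := List.exists_duplicate_iff_not_nodup.mpr hnd
  have hsl : [x, x].Sublist (α.map Prod.fst) := List.duplicate_iff_sublist.mp hdup
  rw [List.sublist_map_iff] at hsl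
  obtain ⟨l', hl', hml'⟩ := hsl
  obtain ⟨q1, t0, rfl⟩ : ∃ q1 t0, l' = q1 :: t0 := by
    cases l' with
    | nil => simp at hml'
    | cons q1 t0 => exact ⟨q1, t0, rfl⟩
  obtain ⟨q2, t2, rfl⟩ : ∃ q2 t2, t0 = q2 :: t2 := by
    cases t0 with
    | nil => simp at hml'
    | cons q2 t2 => exact ⟨q2, t2, rfl⟩
  simp only [List.map_cons, List.cons.injEq] at hml'
  obtain ⟨hq1, hq2, -⟩ := hml'
  have hq1m : q1 ∈ α := hl'.subset (by simp)
  have hq2m : q2 ∈ α := hl'.subset (by simp)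
  have hqeq : q1 = q2 := by
    have hfst : q1.1 = q2.1 := hq1.symm.trans hq2
    exact Prod.ext hfst (h.1.2.1 q1 hq1m q2 hq2m hfst)
  subst hqeq
  have hsl2 : [q1, q1].Sublist α :=
    ((List.cons_sublist_cons.mpr (List.cons_sublist_cons.mpr (List.nil_sublist _))).trans hl')
  obtain ⟨s, t, rfl, hmt⟩ := two_sublist_decomp hsl2
  have hsub_e : (s ++ t).Sublist (s ++ q1 :: t) :=
    List.Sublist.append_left (List.sublist_cons_self q1 t) s
  have hneq : s ++ t ≠ s ++ q1 :: t := by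
    intro he
    have := congrArg List.length he
    simp at this
  have hmemβ : ∀ q ∈ s ++ q1 :: t, q ∈ s ++ t := by
    intro q hq
    rcases List.mem_append.mp hq with hq | hq
    · exact List.mem_append.mpr (Or.inl hq)
    · rcases List.mem_cons.mp hq with rfl | hq
      · exact List.mem_append.mpr (Or.inr hmt)
      · exact List.mem_append.mpr (Or.inr hq)
  refine h.2 (s ++ t) hsub_e hneq ⟨?_, ?_, ?_⟩
  · exact fun q hq => h.1.1 q (hsub_e.subset hq)
  · exact fun p hp q hq => h.1.2.1 p (hsub_e.subset hp) q (hsub_e.subset hq)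
  · rw [annih_rows_empty_iff]
    intro r hr hsat
    have hsatα : Table.rowSat r (s ++ q1 :: t) := fun q hq => hsat q (hmemβ q hq)
    exact (annih_rows_empty_iff.mp h.1.2.2) r hr hsatα

end Annih
section Aux5
open Classical

lemma mem_eraseIdx_of_ne {β : Type*} {α : List β} {l l' : ℕ} (hl' : l' < α.length)
    (hne : l' ≠ l) : α[l'] ∈ α.eraseIdx l := by
  rw [List.eraseIdx_eq_take_drop_succ]
  rcases lt_or_gt_of_ne hne with h | h
  · refine List.mem_append.mpr (Or.inl ?_)
    have hlt : l' < (List.take l α).length := by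
      rw [List.length_take]; omega
    have he : (List.take l α)[l'] = α[l'] := List.getElem_take
    exact he ▸ List.getElem_mem hlt
  · refine List.mem_append.mpr (Or.inr ?_)
    have hlt : l' - (l+1) < (List.drop (l+1) α).length := by
      rw [List.length_drop]; omega
    refine List.mem_iff_getElem.mpr ⟨l' - (l+1), hlt, ?_⟩
    rw [List.getElem_drop]
    congr 1
    omega

lemma rowSat_reverse {r : ℕ → ℕ} {w : List (ℕ × ℕ)} :
    Table.rowSat r w.reverse ↔ Table.rowSat r w := by
  constructor <;> intro h q hq
  · exact h q (List.mem_reverse.mpr hq)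
  · exact h q (List.mem_reverse.mp hq)

lemma paths_node_leaf {a d v : ℕ} :
    (DTree.node (k := 2) a 0 (fun _ => v) (fun _ => DTree.leaf d)).paths = {([(a, v)], d)} := by
  ext p
  simp [DTree.paths]

end Aux5
/-- **Lemma (7M10).** If `T ∈ A_ψ(n)` and `G(T) > 0`, then there exists `T* ∈ [T]` with
`ψ^a(T*) ≤ n` and `ψ^d(T*) ≥ G(T) − 1`. -/
theorem stmt16 (A : Set (Table 2)) (hclosed : IsClosedClass A)
    (hnontriv : NontrivialClass A) (ψ : BCM) (n : ℕ)
    (T : Table 2) (hT : T ∈ A) (hm : mpsi ψ.toPBCM T ≤ n) (hG : 0 < Gt T) :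
    ∃ T' ∈ Table.closureT T, psiA ψ.toPBCM T' ≤ n ∧ Gt T - 1 ≤ psiD ψ.toPBCM T' := by
  classical
  -- extract a maximum-length irreducible annihilating word α
  set S : Set ℕ := {c | ∃ α, isIrredAnnih T α ∧ α.length = c} with hS_def
  have hGt_def : Gt T = sSup S := rfl
  have hSne : S.Nonempty := by
    by_contra hne
    rw [Set.not_nonempty_iff_eq_empty] at hne
    rw [hGt_def, hne, csSup_empty] at hG
    exact absurd hG (by simp)
  have hbdd : BddAbove S := by
    refine ⟨T.attrs.card, ?_⟩
    rintro c ⟨α, hα, rfl⟩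
    have hnd := irred_nodup_fst hα
    calc α.length = (α.map Prod.fst).length := by simp
    _ = (α.map Prod.fst).toFinset.card := (List.toFinset_card_of_nodup hnd).symm
    _ ≤ T.attrs.card := Finset.card_le_card (fun a ha => by
        rw [List.mem_toFinset] at ha
        obtain ⟨q, hq, rfl⟩ := List.mem_map.mp ha
        exact (hα.1.1 q hq).1)
  obtain ⟨α, hirr, hlen⟩ := Nat.sSup_mem hSne hbdd
  have hnd : (α.map Prod.fst).Nodup := irred_nodup_fst hirr
  set m := α.length with hm_def
  have hGtm : Gt T = m := by rw [hGt_def, ← hlen]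
  have hm1 : 1 ≤ m := by rw [hGtm] at hG; omega
  set Aa : ℕ → ℕ := fun l => (α.getD l (0,0)).1 with hAa_def
  set Vv : ℕ → ℕ := fun l => (α.getD l (0,0)).2 with hVv_def
  have hget : ∀ l (hl : l < m), α[l] = (Aa l, Vv l) := by
    intro l hl
    rw [hAa_def, hVv_def]
    simp only [List.getD_eq_getElem _ _ hl]
  have hqmem : ∀ q ∈ α, ∃ l, l < m ∧ Aa l = q.1 ∧ Vv l = q.2 := by
    intro q hq
    obtain ⟨l, hl, hl2⟩ := List.mem_iff_getElem.mp hq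
    refine ⟨l, hl, ?_, ?_⟩
    · rw [← hl2, hget l hl]
    · rw [← hl2, hget l hl]
  have hAmem : ∀ l, l < m → Aa l ∈ T.attrs ∧ Vv l < 2 := by
    intro l hl
    have := hirr.1.1 α[l] (List.getElem_mem hl)
    rwa [hget l hl] at this
  have hAinj : ∀ l, l < m → ∀ l', l' < m → Aa l = Aa l' → l = l' := by
    intro l hl l' hl' he
    have hlm : l < (α.map Prod.fst).length := by
      rw [List.length_map, ← hm_def]; exact hl
    have hlm' : l' < (α.map Prod.fst).length := by
      rw [List.length_map, ← hm_def]; exact hl'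
    have h1 : (α.map Prod.fst)[l]'hlm = Aa l := by
      rw [List.getElem_map, hget l hl]
    have h2 : (α.map Prod.fst)[l']'hlm' = Aa l' := by
      rw [List.getElem_map, hget l' hl']
    have h3 : (α.map Prod.fst)[l]'hlm = (α.map Prod.fst)[l']'hlm' := by rw [h1, h2, he]
    exact (hnd.getElem_inj_iff).mp h3
  have hαempty : ∀ r ∈ T.rows, ¬ Table.rowSat r α := annih_rows_empty_iff.mp hirr.1.2.2
  have hfail : ∀ r ∈ T.rows, ∃ l, l < m ∧ r (Aa l) ≠ Vv l := by
    intro r hr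
    have := hαempty r hr
    rw [Table.rowSat] at this
    push_neg at this
    obtain ⟨q, hq, hne⟩ := this
    obtain ⟨l, hl, ha, hv⟩ := hqmem q hq
    exact ⟨l, hl, by rw [ha, hv]; exact hne⟩
  -- rows witnessing irreducibility
  have hex : ∀ l, ∃ rr : ℕ → ℕ, l < m →
      rr ∈ T.rows ∧ (∀ l', l' < m → l' ≠ l → rr (Aa l') = Vv l') ∧ rr (Aa l) ≠ Vv l := by
    intro l
    by_cases hl : l < m
    · have hsl : (α.eraseIdx l).Sublist α := List.eraseIdx_sublist α l
      have hlne : α.eraseIdx l ≠ α := by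
        intro he
        have := (List.length_eraseIdx : (α.eraseIdx l).length = _)
        rw [he] at this
        rw [if_pos hl] at this
        omega
      have hnotann := hirr.2 (α.eraseIdx l) hsl hlne
      have hsat : ∃ r ∈ T.rows, Table.rowSat r (α.eraseIdx l) := by
        by_contra hno
        push_neg at hno
        exact hnotann ⟨fun q hq => hirr.1.1 q (hsl.subset hq),
          fun p hp q hq => hirr.1.2.1 p (hsl.subset hp) q (hsl.subset hq),
          annih_rows_empty_iff.mpr hno⟩
      obtain ⟨r, hr, hrsat⟩ := hsat
      refine ⟨r, fun _ => ⟨hr, ?_, ?_⟩⟩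
      · intro l' hl' hne
        have hmem : α[l'] ∈ α.eraseIdx l := mem_eraseIdx_of_ne hl' hne
        have := hrsat α[l'] hmem
        rwa [hget l' hl'] at this
      · intro heq
        obtain ⟨l'', hl'', hne''⟩ := hfail r hr
        rcases eq_or_ne l'' l with rfl | hne
        · exact hne'' heq
        · have hmem : α[l''] ∈ α.eraseIdx l := mem_eraseIdx_of_ne hl'' hne
          have := hrsat α[l''] hmem
          rw [hget l'' hl''] at this
          exact hne'' this
    · exact ⟨fun _ => 0, fun h => absurd h hl⟩
  choose rj hrj using hex
  have hTne : T.rows ≠ ∅ := Finset.ne_empty_of_mem (hrj 0 hm1).1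
  -- the closure table T'
  set E : Finset ℕ := (α.map Prod.fst).toFinset with hE_def
  have hEsub : E ⊆ T.attrs := by
    intro a ha
    rw [hE_def, List.mem_toFinset] at ha
    obtain ⟨q, hq, rfl⟩ := List.mem_map.mp ha
    exact (hirr.1.1 q hq).1
  set D : Finset ℕ := T.attrs \ E with hD_def
  have hSE : T.attrs \ D = E := by
    rw [hD_def, Finset.sdiff_sdiff_self_left, Finset.inter_eq_right.mpr hEsub]
  have hAE : ∀ l, l < m → Aa l ∈ T.attrs \ D := by
    intro l hl
    rw [hSE, hE_def, List.mem_toFinset]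
    exact List.mem_map.mpr ⟨α[l], List.getElem_mem hl, by rw [hget l hl]⟩
  set T' : Table 2 :=
    { attrs := T.attrs \ D
      rows := T.rows.image (fun r i => if i ∈ T.attrs \ D then r i else 0)
      dec := fun ρ => (Finset.range m).filter (fun l => ρ (Aa l) ≠ Vv l)
      rows_mem := by
        intro rr hrr
        obtain ⟨r0, hr0, rfl⟩ := Finset.mem_image.mp hrr
        constructor
        · intro i hi
          show (if i ∈ T.attrs \ D then r0 i else 0) < 2
          rw [if_pos hi]
          exact (T.rows_mem r0 hr0).1 i (Finset.mem_sdiff.mp hi).1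
        · intro i hi
          show (if i ∈ T.attrs \ D then r0 i else 0) = 0
          rw [if_neg hi]
      dec_nonempty := by
        intro rr hrr
        obtain ⟨r0, hr0, rfl⟩ := Finset.mem_image.mp hrr
        obtain ⟨l, hl, hne⟩ := hfail r0 hr0
        refine ⟨l, Finset.mem_filter.mpr ⟨Finset.mem_range.mpr hl, ?_⟩⟩
        show ¬ (if Aa l ∈ T.attrs \ D then r0 (Aa l) else 0) = Vv l
        rw [if_pos (hAE l hl)]
        exact hne } with hT'_def
  have hT'attrs : T'.attrs = T.attrs \ D := rfl
  have hT'rows : T'.rows = T.rows.image (fun r i => if i ∈ T.attrs \ D then r i else 0) := rfl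
  have hT'dec : ∀ ρ, T'.dec ρ = (Finset.range m).filter (fun l => ρ (Aa l) ≠ Vv l) := fun _ => rfl
  have hclos : T' ∈ Table.closureT T := ⟨D, Finset.sdiff_subset, rfl, rfl⟩
  -- the special rows ρ j
  set ρ : ℕ → ℕ → ℕ := fun j i => if i ∈ T.attrs \ D then rj j i else 0 with hρ_def
  have hρmem : ∀ j, j < m → ρ j ∈ T'.rows := by
    intro j hj
    rw [hT'rows]
    exact Finset.mem_image.mpr ⟨rj j, (hrj j hj).1, rfl⟩
  have hval : ∀ j, j < m → ∀ l, l < m → l ≠ j → ρ j (Aa l) = Vv l := by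
    intro j hj l hl hne
    show (if Aa l ∈ T.attrs \ D then rj j (Aa l) else 0) = Vv l
    rw [if_pos (hAE l hl)]
    exact (hrj j hj).2.1 l hl hne
  have hvalj : ∀ j, j < m → ρ j (Aa j) ≠ Vv j := by
    intro j hj
    show ¬ (if Aa j ∈ T.attrs \ D then rj j (Aa j) else 0) = Vv j
    rw [if_pos (hAE j hj)]
    exact (hrj j hj).2.2
  have hout : ∀ j, j < m → ∀ a, (∀ l, l < m → Aa l ≠ a) → ρ j a = 0 := by
    intro j hj a hno
    show (if a ∈ T.attrs \ D then rj j a else 0) = 0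
    rw [if_neg]
    intro hmem
    rw [hSE, hE_def, List.mem_toFinset] at hmem
    obtain ⟨q, hq, rfl⟩ := List.mem_map.mp hmem
    obtain ⟨l, hl, ha, -⟩ := hqmem q hq
    exact hno l hl ha
  have hdecρ : ∀ j, j < m → ∀ d, d ∈ T'.dec (ρ j) → d = j := by
    intro j hj d hd
    rw [hT'dec] at hd
    obtain ⟨hdm, hdne⟩ := Finset.mem_filter.mp hd
    rw [Finset.mem_range] at hdm
    by_contra hne
    exact hdne (hval j hj d hdm hne)
  -- Part 1 : nondeterministic tree of depth 1
  have hmm : m - 1 + 1 = m := by omega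
  set Γ₁ : KTree 2 := ⟨m - 1, fun j =>
    DTree.node (Aa (j : ℕ)) 0 (fun _ => 1 - Vv (j : ℕ)) (fun _ => DTree.leaf (j : ℕ))⟩
    with hΓ₁_def
  have hjm : ∀ j : Fin (m - 1 + 1), (j : ℕ) < m := fun j => by have := j.isLt; omega
  have hΓ₁paths : ∀ p, p ∈ Γ₁.paths ↔
      ∃ j : Fin (m - 1 + 1), p = ([(Aa (j : ℕ), 1 - Vv (j : ℕ))], (j : ℕ)) := by
    intro p
    rw [KTree.paths]
    simp only [Set.mem_iUnion, hΓ₁_def]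
    constructor
    · rintro ⟨j, hp⟩
      rw [paths_node_leaf] at hp
      exact ⟨j, hp⟩
    · rintro ⟨j, hp⟩
      exact ⟨j, by rw [paths_node_leaf]; exact hp⟩
  have hNDT : isNDT T' Γ₁ := by
    refine ⟨⟨ρ 0, hρmem 0 hm1⟩, ?_, ?_, ?_, ?_⟩
    · intro j
      refine ⟨fun i => ?_, fun _ => trivial⟩
      show 1 - Vv (j:ℕ) < 2
      omega
    · intro a ha
      rw [KTree.attrs, Finset.mem_biUnion] at ha
      obtain ⟨j, -, hj⟩ := ha
      have hj' : a ∈ insert (Aa (j:ℕ))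
          ((Finset.univ : Finset (Fin 1)).biUnion fun _ => (∅ : Finset ℕ)) := hj
      rcases Finset.mem_insert.mp hj' with rfl | hj2
      · rw [hT'attrs]; exact hAE _ (hjm j)
      · obtain ⟨-, -, hj3⟩ := Finset.mem_biUnion.mp hj2
        exact absurd hj3 (Finset.notMem_empty a)
    · intro rr hrr
      rw [hT'rows] at hrr
      obtain ⟨r0, hr0, rfl⟩ := Finset.mem_image.mp hrr
      obtain ⟨l, hl, hne⟩ := hfail r0 hr0
      have hv2 : r0 (Aa l) < 2 := (T.rows_mem r0 hr0).1 _ (hAmem l hl).1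
      have hVl : Vv l < 2 := (hAmem l hl).2
      refine ⟨([(Aa l, 1 - Vv l)], l), (hΓ₁paths _).mpr ⟨⟨l, by omega⟩, by simp⟩, ?_⟩
      intro q hq
      rcases List.mem_cons.mp hq with rfl | hq
      · show (if Aa l ∈ T.attrs \ D then r0 (Aa l) else 0) = 1 - Vv l
        rw [if_pos (hAE l hl)]
        omega
      · exact absurd hq List.not_mem_nil
    · intro p hp
      obtain ⟨j, rfl⟩ := (hΓ₁paths p).mp hp
      refine Or.inr ?_
      intro rr hrr
      rw [Table.applyWord] at hrr
      obtain ⟨hrr', hsat⟩ := Finset.mem_filter.mp hrr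
      have h1 : rr (Aa (j:ℕ)) = 1 - Vv (j:ℕ) := hsat _ (List.mem_cons_self)
      have hVl : Vv (j:ℕ) < 2 := (hAmem _ (hjm j)).2
      rw [hT'dec]
      refine Finset.mem_filter.mpr ⟨Finset.mem_range.mpr (hjm j), ?_⟩
      show ¬ rr (Aa (j:ℕ)) = Vv (j:ℕ)
      omega
  have hpsiA : psiA ψ.toPBCM T' ≤ n := by
    have h1 : treeComp ψ.toPBCM Γ₁ ≤ n := by
      refine treeComp_le _ _ ?_
      intro p hp
      obtain ⟨j, rfl⟩ := (hΓ₁paths p).mp hp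
      have : ψ.toPBCM.onWord [(Aa (j:ℕ), 1 - Vv (j:ℕ))] = ψ.toFun [Aa (j:ℕ)] := rfl
      rw [this]
      rw [mpsi, if_neg hTne] at hm
      exact le_trans (Finset.le_sup (f := fun i => ψ.toFun [i]) (hAmem _ (hjm j)).1) hm
    exact le_trans (Nat.sInf_le ⟨Γ₁, hNDT, rfl⟩) h1
  -- Part 2 : deterministic lower bound
  set l₀ : List ℕ := E.sort (· ≤ ·) with hl₀_def
  set g : List (ℕ × ℕ) → ℕ := chooseDec T' with hg_def
  set Γ₀ : KTree 2 := ⟨0, fun _ => fullDT g l₀ []⟩ with hΓ₀_def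
  have hΓ₀paths : Γ₀.paths = (fullDT g l₀ []).paths := by
    ext p
    constructor
    · intro hp
      obtain ⟨i, hi⟩ := Set.mem_iUnion.mp hp
      exact hi
    · intro hp
      exact Set.mem_iUnion.mpr ⟨0, hp⟩
  have hrow0 : ∀ rr ∈ T'.rows, ∀ i, i ∉ E → rr i = 0 := by
    intro rr hrr i hi
    exact (T'.rows_mem rr hrr).2 i (by rwa [hT'attrs, hSE])
  have hrow2 : ∀ rr ∈ T'.rows, ∀ i, i ∈ E → rr i < 2 := by
    intro rr hrr i hi
    exact (T'.rows_mem rr hrr).1 i (by rwa [hT'attrs, hSE])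
  have huniqrow : ∀ u : List (ℕ × ℕ), u.map Prod.fst = l₀ →
      ∀ rr ∈ T'.rows, ∀ rr' ∈ T'.rows, Table.rowSat rr u → Table.rowSat rr' u → rr' = rr := by
    intro u hmap rr hrr rr' hrr' hsat hsat'
    funext i
    by_cases hi : i ∈ E
    · have : i ∈ u.map Prod.fst := by rw [hmap, hl₀_def]; exact (Finset.mem_sort _).mpr hi
      obtain ⟨q, hq, hq1⟩ := List.mem_map.mp this
      rw [← hq1, hsat q hq, hsat' q hq]
    · rw [hrow0 rr hrr i hi, hrow0 rr' hrr' i hi]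
  have hDDT : isDDT T' Γ₀ := by
    refine ⟨⟨⟨ρ 0, hρmem 0 hm1⟩, ?_, ?_, ?_, ?_⟩, rfl, ?_⟩
    · intro i
      exact fullDT_wf g l₀ []
    · intro a ha
      rw [KTree.attrs, Finset.mem_biUnion] at ha
      obtain ⟨i, -, hi⟩ := ha
      have := fullDT_attrs g l₀ [] hi
      rw [hl₀_def, Finset.sort_toFinset] at this
      rwa [hT'attrs, hSE]
    · intro rr hrr
      refine ⟨(l₀.map (fun a => (a, rr a)), g ((l₀.map (fun a => (a, rr a))).reverse ++ [])), ?_, ?_⟩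
      · rw [hΓ₀paths, fullDT_paths]
        refine ⟨l₀.map (fun a => (a, rr a)), by simp [Function.comp_def], ?_, rfl⟩
        intro q hq
        obtain ⟨a, ha, rfl⟩ := List.mem_map.mp hq
        exact hrow2 rr hrr a ((Finset.mem_sort _).mp (by rwa [← hl₀_def]))
      · intro q hq
        obtain ⟨a, ha, rfl⟩ := List.mem_map.mp hq
        rfl
    · intro p hp
      rw [hΓ₀paths, fullDT_paths] at hp
      obtain ⟨u, hmap, hvals, rfl⟩ := hp
      by_cases hne : (T'.applyWord u).rows = ∅
      · exact Or.inl hne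
      · refine Or.inr ?_
        intro rr hrr
        have hsubeq : (T'.applyWord (u.reverse ++ [])).rows = (T'.applyWord u).rows := by
          rw [List.append_nil]
          simp only [Table.applyWord]
          apply Finset.filter_congr
          intro r _
          exact rowSat_reverse
        obtain ⟨hrr', hsat⟩ := Finset.mem_filter.mp hrr
        refine chooseDec_mem T' (u.reverse ++ []) (by rw [hsubeq]; exact hrr) ?_
        intro rr2 hrr2
        rw [hsubeq] at hrr2
        obtain ⟨hrr2', hsat2⟩ := Finset.mem_filter.mp hrr2
        exact huniqrow u hmap rr hrr' rr2 hrr2' hsat hsat2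
    · intro i
      exact fullDT_det g l₀ []
  have hpsiD : Gt T - 1 ≤ psiD ψ.toPBCM T' := by
    rw [hGtm]
    refine le_csInf ⟨treeComp ψ.toPBCM Γ₀, Γ₀, hDDT, rfl⟩ ?_
    rintro c ⟨Γ, hΓ, rfl⟩
    obtain ⟨hNDT', hn0, hdet⟩ := hΓ
    set i0 : Fin (Γ.n + 1) := ⟨0, by omega⟩ with hi0_def
    have hpathsΓ : Γ.paths = (Γ.sub i0).paths := by
      ext p
      constructor
      · intro hp
        obtain ⟨i, hi⟩ := Set.mem_iUnion.mp hp
        have : i = i0 := by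
          apply Fin.ext
          have := i.isLt
          omega
        rwa [this] at hi
      · intro hp
        exact Set.mem_iUnion.mpr ⟨i0, hp⟩
    have C1 : ∀ j ∈ Finset.range m, ∃ p ∈ (Γ.sub i0).paths, Table.rowSat (ρ j) p.1 := by
      intro j hj
      rw [Finset.mem_range] at hj
      obtain ⟨p, hp, hsat⟩ := hNDT'.2.2.2.1 (ρ j) (hρmem j hj)
      exact ⟨p, hpathsΓ ▸ hp, hsat⟩
    have C2 : ∀ p ∈ (Γ.sub i0).paths, ∀ j ∈ Finset.range m,
        Table.rowSat (ρ j) p.1 → p.2 = j := by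
      intro p hp j hj hsat
      rw [Finset.mem_range] at hj
      have hpΓ : p ∈ Γ.paths := hpathsΓ ▸ hp
      have hmem : ρ j ∈ (T'.applyWord p.1).rows :=
        Finset.mem_filter.mpr ⟨hρmem j hj, hsat⟩
      rcases hNDT'.2.2.2.2 p hpΓ with hemp | hcom
      · rw [hemp] at hmem
        exact absurd hmem (Finset.notMem_empty _)
      · exact hdecρ j hj p.2 (hcom (ρ j) hmem)
    obtain ⟨p, hp, hconc⟩ := walk_lemma Aa Vv m ρ hAinj hval hout (Γ.sub i0) (hdet i0)
      (Finset.range m) (fun j hj => Finset.mem_range.mp hj) C1 C2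
    have hcard : m - 1 ≤ ((p.1.map Prod.fst).toFinset).card := by
      have h1 : ((Finset.range m).erase p.2).card ≤ ((p.1.map Prod.fst).toFinset).card := by
        refine Finset.card_le_card_of_injOn Aa ?_ ?_
        · intro l hl
          have hlm := Finset.mem_range.mp (Finset.mem_of_mem_erase hl)
          have hlne := Finset.ne_of_mem_erase hl
          rcases hconc l (Finset.mem_range.mpr hlm) with h | ⟨q, hq, hq1⟩
          · exact absurd h hlne
          · rw [Finset.mem_coe, List.mem_toFinset]
            exact List.mem_map.mpr ⟨q, hq, hq1⟩
        · intro l hl l' hl' he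
          have hlm := Finset.mem_range.mp (Finset.mem_of_mem_erase hl)
          have hlm' := Finset.mem_range.mp (Finset.mem_of_mem_erase hl')
          exact hAinj l hlm l' hlm' he
      calc m - 1 = (Finset.range m).card - 1 := by rw [Finset.card_range]
      _ ≤ ((Finset.range m).erase p.2).card := Finset.pred_card_le_card_erase
      _ ≤ _ := h1
    have hlenp : m - 1 ≤ (p.1.map Prod.fst).length :=
      le_trans hcard (List.toFinset_card_le _)
    have hψ : m - 1 ≤ ψ.toPBCM.onWord p.1 :=
      le_trans hlenp (ψ.bdd _)
    exact le_trans hψ (le_treeComp ψ.toPBCM Γ ((hpathsΓ).symm ▸ hp))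
  exact ⟨T', hclos, hpsiA, hpsiD⟩
end Walk
end

section
/- Let A be a nontrivial closed class of decision tables from M_2^∞ and ψ a bounded complexity measure. If the function G_{ψ,A} is not everywhere defined, then the function H^∞_{ψ,A} is not everywhere defined. -/
open Classical

/-! ### Auxiliary development for `stmt17` -/

section AuxStmt17

open Classical

/-- every 2-decision subtree has a complete path -/
lemma dtree_paths_nonempty (t : DTree 2) : t.paths.Nonempty := by
  induction t with
  | leaf d => exact ⟨([], d), rfl⟩
  | node a n lab ch ih =>
    obtain ⟨p, hp⟩ := ih 0
    exact ⟨((a, lab 0) :: p.1, p.2), Set.mem_iUnion.2 ⟨0, ⟨p, hp, rfl⟩⟩⟩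

/-- the set of complete paths of a subtree is finite -/
lemma dtree_paths_finite (t : DTree 2) : t.paths.Finite := by
  induction t with
  | leaf d => exact Set.finite_singleton _
  | node a n lab ch ih =>
    exact Set.finite_iUnion fun i => (ih i).image _

lemma ktree_paths_finite (Γ : KTree 2) : Γ.paths.Finite :=
  Set.finite_iUnion fun i => dtree_paths_finite _

/-- Key combinatorial lemma: in a deterministic subtree, if a family of pairwise
"coherent" rows (any two agree outside their two distinguished attributes) must reach
paths with pairwise different decisions, then some path is long. -/
lemma det_card_le {ι : Type} (t : DTree 2) :
    ∀ (J : Finset ι) (q : ι → ℕ → ℕ) (a : ι → ℕ) (jd : ι → ℕ),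
      (∀ j ∈ J, ∀ j' ∈ J, a j = a j' → j = j') →
      (∀ j ∈ J, ∀ j' ∈ J, jd j = jd j' → j = j') →
      (∀ j ∈ J, ∀ j' ∈ J, ∀ i, i ≠ a j → i ≠ a j' → q j i = q j' i) →
      t.det →
      (∀ j ∈ J, ∃ w, (w, jd j) ∈ t.paths ∧ Table.rowSat (q j) w) →
      ∃ p ∈ t.paths, J.card ≤ p.1.length + 1 := by
  induction t with
  | leaf d =>
    intro J q a jd ha hjd hcoh hdet hsat
    refine ⟨([], d), rfl, ?_⟩
    have : J.card ≤ 1 := by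
      rw [Finset.card_le_one]
      intro j hj j' hj'
      obtain ⟨w, hw, -⟩ := hsat j hj
      obtain ⟨w', hw', -⟩ := hsat j' hj'
      have h1 : jd j = d := congrArg Prod.snd hw
      have h2 : jd j' = d := congrArg Prod.snd hw'
      exact hjd j hj j' hj' (h1.trans h2.symm)
    omega
  | node b n lab ch ih =>
    intro J q a jd ha hjd hcoh hdet hsat
    obtain ⟨hinj, hchdet⟩ := hdet
    set J' := J.filter (fun j => a j ≠ b) with hJ'
    have hJ'sub : J' ⊆ J := Finset.filter_subset _ _
    have hcard : J.card ≤ J'.card + 1 := by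
      have h1 := Finset.card_filter_add_card_filter_not (s := J)
        (p := fun j => a j ≠ b)
      rw [← hJ'] at h1
      have h2 : (J.filter fun j => ¬ (a j ≠ b)).card ≤ 1 := by
        rw [Finset.card_le_one]
        intro j hj j' hj'
        simp only [Finset.mem_filter, not_not] at hj hj'
        exact ha j hj.1 j' hj'.1 (hj.2.trans hj'.2.symm)
      omega
    rcases J'.eq_empty_or_nonempty with hJe | ⟨j₁, hj₁⟩
    · obtain ⟨p, hp⟩ := dtree_paths_nonempty (DTree.node b n lab ch)
      refine ⟨p, hp, ?_⟩
      rw [hJe, Finset.card_empty] at hcard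
      omega
    · have hj₁J : j₁ ∈ J := hJ'sub hj₁
      have hj₁b : a j₁ ≠ b := (Finset.mem_filter.1 hj₁).2
      -- decompose the path of j₁
      obtain ⟨w₁, hw₁, hs₁⟩ := hsat j₁ hj₁J
      rw [DTree.paths, Set.mem_iUnion] at hw₁
      obtain ⟨i₁, p₁, hp₁, heq₁⟩ := hw₁
      have hval₁ : q j₁ b = lab i₁ := by
        have : (b, lab i₁) ∈ w₁ := by
          have : w₁ = (b, lab i₁) :: p₁.1 := (congrArg Prod.fst heq₁).symm
          rw [this]; exact List.mem_cons_self
        exact hs₁ _ this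
      -- every j ∈ J' goes through child i₁
      have hsat' : ∀ j ∈ J', ∃ w, (w, jd j) ∈ (ch i₁).paths ∧ Table.rowSat (q j) w := by
        intro j hj
        have hjJ : j ∈ J := hJ'sub hj
        have hjb : a j ≠ b := (Finset.mem_filter.1 hj).2
        obtain ⟨w, hw, hs⟩ := hsat j hjJ
        rw [DTree.paths, Set.mem_iUnion] at hw
        obtain ⟨i, p, hp, heq⟩ := hw
        have hwd : w = (b, lab i) :: p.1 := (congrArg Prod.fst heq).symm
        have hval : q j b = lab i := hs _ (by rw [hwd]; exact List.mem_cons_self)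
        have hqq : q j b = q j₁ b :=
          hcoh j hjJ j₁ hj₁J b (fun h => hjb h.symm) (fun h => hj₁b h.symm)
        have : i = i₁ := hinj (by rw [← hval, hqq, hval₁])
        subst this
        refine ⟨p.1, ?_, ?_⟩
        · have hpd : p.2 = jd j := by
            have := congrArg Prod.snd heq; simpa using this
          rw [← hpd]; exact hp
        · intro x hx
          exact hs x (by rw [hwd]; exact List.mem_cons_of_mem _ hx)
      obtain ⟨p', hp', hlen⟩ := ih i₁ J' q a jd
        (fun j hj j' hj' h => ha j (hJ'sub hj) j' (hJ'sub hj') h)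
        (fun j hj j' hj' h => hjd j (hJ'sub hj) j' (hJ'sub hj') h)
        (fun j hj j' hj' i h1 h2 => hcoh j (hJ'sub hj) j' (hJ'sub hj') i h1 h2)
        (hchdet i₁) hsat'
      refine ⟨((b, lab i₁) :: p'.1, p'.2), Set.mem_iUnion.2 ⟨i₁, ⟨p', hp', rfl⟩⟩, ?_⟩
      simp only [List.length_cons]
      omega

/-- full deterministic binary decision subtree over the attribute list `L`,
with terminal decisions computed by `d` from the accumulated word -/
def buildT (d : List (ℕ × ℕ) → ℕ) : List ℕ → List (ℕ × ℕ) → DTree 2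
  | [], w => .leaf (d w)
  | b :: L, w => .node b 1 (fun i => (i : ℕ)) (fun i => buildT d L (w ++ [(b, (i : ℕ))]))

lemma buildT_wf (d : List (ℕ × ℕ) → ℕ) : ∀ (L : List ℕ) (w : List (ℕ × ℕ)),
    (buildT d L w).wf := by
  intro L
  induction L with
  | nil => intro w; trivial
  | cons b L ih =>
    intro w
    exact ⟨fun i => i.2, fun i => ih _⟩

lemma buildT_det (d : List (ℕ × ℕ) → ℕ) : ∀ (L : List ℕ) (w : List (ℕ × ℕ)),
    (buildT d L w).det := by
  intro L
  induction L with
  | nil => intro w; trivial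
  | cons b L ih =>
    intro w
    exact ⟨fun i i' h => Fin.ext h, fun i => ih _⟩

lemma buildT_attrs (d : List (ℕ × ℕ) → ℕ) : ∀ (L : List ℕ) (w : List (ℕ × ℕ)),
    (buildT d L w).attrs ⊆ L.toFinset := by
  intro L
  induction L with
  | nil => intro w; simp [buildT, DTree.attrs]
  | cons b L ih =>
    intro w
    intro x hx
    simp only [buildT, DTree.attrs, Finset.mem_insert, Finset.mem_biUnion] at hx
    rcases hx with rfl | ⟨i, -, hx⟩
    · simp
    · simp only [List.toFinset_cons, Finset.mem_insert]
      exact Or.inr (ih _ hx)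

lemma buildT_paths (d : List (ℕ × ℕ) → ℕ) : ∀ (L : List ℕ) (w : List (ℕ × ℕ)),
    ∀ p ∈ (buildT d L w).paths, p.1.map Prod.fst = L ∧ p.2 = d (w ++ p.1) := by
  intro L
  induction L with
  | nil =>
    intro w p hp
    have : p = ([], d w) := hp
    subst this
    simp
  | cons b L ih =>
    intro w p hp
    simp only [buildT, DTree.paths, Set.mem_iUnion] at hp
    obtain ⟨i, p', hp', rfl⟩ := hp
    obtain ⟨h1, h2⟩ := ih (w ++ [(b, (i : ℕ))]) p' hp'
    constructor
    · simp [h1]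
    · simpa [List.append_assoc] using h2

lemma buildT_cover (d : List (ℕ × ℕ) → ℕ) : ∀ (L : List ℕ) (w : List (ℕ × ℕ))
    (r : ℕ → ℕ), (∀ b ∈ L, r b < 2) →
    ((L.map fun b => (b, r b)), d (w ++ L.map fun b => (b, r b))) ∈ (buildT d L w).paths := by
  intro L
  induction L with
  | nil =>
    intro w r _
    simp [buildT, DTree.paths]
  | cons b L ih =>
    intro w r hr
    simp only [buildT, DTree.paths, Set.mem_iUnion]
    refine ⟨⟨r b, hr b (List.mem_cons_self)⟩, ?_⟩
    refine ⟨((L.map fun b => (b, r b)), d (w ++ [(b, r b)] ++ L.map fun b => (b, r b))), ?_, ?_⟩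
    · exact ih (w ++ [(b, r b)]) r (fun x hx => hr x (List.mem_cons_of_mem _ hx))
    · simp [List.append_assoc]

end AuxStmt17
section AuxStmt17b

open Classical

/-- the table `Q` obtained from `T` by keeping only the columns of `α` and
relabeling the decision of each row by the set of positions of `α` where it
disagrees with `α` -/
noncomputable def mkQ (T : Table 2) (α : List (ℕ × ℕ))
    (hsub : (α.map Prod.fst).toFinset ⊆ T.attrs)
    (hne : ∀ r ∈ T.rows, ¬ Table.rowSat r α) : Table 2 where
  attrs := T.attrs \ (T.attrs \ (α.map Prod.fst).toFinset)
  rows := T.rows.image fun r i =>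
    if i ∈ T.attrs \ (T.attrs \ (α.map Prod.fst).toFinset) then r i else 0
  dec := fun r => (Finset.range α.length).filter fun i =>
    r (α.getD i (0,0)).1 ≠ (α.getD i (0,0)).2
  rows_mem := by
    intro r hr
    obtain ⟨r₀, hr₀, rfl⟩ := Finset.mem_image.1 hr
    constructor
    · intro i hi
      simp only [hi, if_pos]
      exact (T.rows_mem r₀ hr₀).1 i (Finset.mem_sdiff.1 hi).1
    · intro i hi
      exact if_neg hi
  dec_nonempty := by
    intro r hr
    obtain ⟨r₀, hr₀, rfl⟩ := Finset.mem_image.1 hr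
    have h := hne r₀ hr₀
    simp only [Table.rowSat, not_forall] at h
    obtain ⟨q, hq, hqv⟩ := h
    obtain ⟨j, hjq⟩ := List.mem_iff_get.1 hq
    refine ⟨(j : ℕ), Finset.mem_filter.2 ⟨Finset.mem_range.2 j.2, ?_⟩⟩
    have hgd : α.getD (j : ℕ) (0,0) = q := by
      rw [List.getD_eq_getElem _ _ j.2]; exact hjq
    rw [hgd]
    have hq1 : q.1 ∈ T.attrs \ (T.attrs \ (α.map Prod.fst).toFinset) := by
      have h1 : q.1 ∈ (α.map Prod.fst).toFinset := by
        simp only [List.mem_toFinset, List.mem_map]; exact ⟨q, hq, rfl⟩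
      exact Finset.mem_sdiff.2 ⟨hsub h1, by simp [h1]⟩
    show ¬ (if _ ∈ _ then r₀ q.1 else 0) = q.2
    rw [if_pos hq1]; exact hqv

lemma mkQ_mem_closure (T : Table 2) (α : List (ℕ × ℕ))
    (hsub : (α.map Prod.fst).toFinset ⊆ T.attrs)
    (hne : ∀ r ∈ T.rows, ¬ Table.rowSat r α) :
    mkQ T α hsub hne ∈ Table.closureT T :=
  ⟨T.attrs \ (α.map Prod.fst).toFinset, Finset.sdiff_subset, rfl, rfl⟩

lemma mkQ_attrs (T : Table 2) (α : List (ℕ × ℕ))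
    (hsub : (α.map Prod.fst).toFinset ⊆ T.attrs)
    (hne : ∀ r ∈ T.rows, ¬ Table.rowSat r α) :
    (mkQ T α hsub hne).attrs = (α.map Prod.fst).toFinset := by
  show T.attrs \ (T.attrs \ (α.map Prod.fst).toFinset) = _
  rw [Finset.sdiff_sdiff_self_left, Finset.inter_eq_right.2 hsub]

lemma mkQ_rows (T : Table 2) (α : List (ℕ × ℕ))
    (hsub : (α.map Prod.fst).toFinset ⊆ T.attrs)
    (hne : ∀ r ∈ T.rows, ¬ Table.rowSat r α) :
    (mkQ T α hsub hne).rows = T.rows.image fun r i =>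
      if i ∈ (α.map Prod.fst).toFinset then r i else 0 := by
  show T.rows.image _ = _
  rw [Finset.sdiff_sdiff_self_left, Finset.inter_eq_right.2 hsub]

end AuxStmt17b
section AuxStmt17c

open Classical

lemma single_node_paths (a v d : ℕ) :
    (DTree.node (k := 2) a 0 (fun _ => v) (fun _ => DTree.leaf d)).paths = {([(a, v)], d)} := by
  ext p
  simp only [DTree.paths, Set.mem_iUnion, Set.mem_image, Set.mem_singleton_iff]
  constructor
  · rintro ⟨i, p', hp', rfl⟩
    rw [show p' = (([] : List (ℕ × ℕ)), d) from hp']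
  · rintro rfl
    exact ⟨0, ([], d), rfl, rfl⟩

def oneIdx {m : ℕ} (hm : 0 < m) (i : Fin (m + 1)) : Fin m :=
  if h : (i : ℕ) < m then ⟨i, h⟩ else ⟨0, hm⟩

/-- the nondeterministic tree testing, on its `j`-th branch, the attribute `a j`
against the value `1 - v j`, answering `j` -/
def oneTestTree {m : ℕ} (hm : 0 < m) (a v : Fin m → ℕ) : KTree 2 :=
  ⟨m, fun i => DTree.node (a (oneIdx hm i)) 0 (fun _ => 1 - v (oneIdx hm i))
      (fun _ => DTree.leaf (oneIdx hm i))⟩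

lemma oneTestTree_paths {m : ℕ} (hm : 0 < m) (a v : Fin m → ℕ) (p : List (ℕ × ℕ) × ℕ) :
    p ∈ (oneTestTree hm a v).paths ↔ ∃ j : Fin m, p = ([(a j, 1 - v j)], (j : ℕ)) := by
  constructor
  · intro hp
    obtain ⟨i, hi⟩ := Set.mem_iUnion.1 hp
    rw [show (oneTestTree hm a v).sub i = DTree.node (a (oneIdx hm i)) 0
      (fun _ => 1 - v (oneIdx hm i)) (fun _ => DTree.leaf (oneIdx hm i)) from rfl,
      single_node_paths] at hi
    exact ⟨oneIdx hm i, hi⟩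
  · rintro ⟨j, rfl⟩
    refine Set.mem_iUnion.2 ⟨⟨(j : ℕ), Nat.lt_succ_of_lt j.2⟩, ?_⟩
    rw [show (oneTestTree hm a v).sub ⟨(j : ℕ), Nat.lt_succ_of_lt j.2⟩ = DTree.node
      (a (oneIdx hm ⟨(j : ℕ), Nat.lt_succ_of_lt j.2⟩)) 0
      (fun _ => 1 - v (oneIdx hm ⟨(j : ℕ), Nat.lt_succ_of_lt j.2⟩))
      (fun _ => DTree.leaf (oneIdx hm ⟨(j : ℕ), Nat.lt_succ_of_lt j.2⟩)) from rfl,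
      single_node_paths]
    have hj : oneIdx hm ⟨(j : ℕ), Nat.lt_succ_of_lt j.2⟩ = j := by
      simp only [oneIdx, j.2, dif_pos]
    rw [hj]
    rfl

lemma oneTestTree_wf {m : ℕ} (hm : 0 < m) (a v : Fin m → ℕ) :
    (oneTestTree hm a v).wf :=
  fun _ => ⟨fun _ => lt_of_le_of_lt (Nat.sub_le 1 _) one_lt_two, fun _ => trivial⟩

lemma oneTestTree_attrs {m : ℕ} (hm : 0 < m) (a v : Fin m → ℕ) :
    (oneTestTree hm a v).attrs ⊆ Finset.univ.image a := by
  intro x hx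
  simp only [oneTestTree, KTree.attrs, Finset.mem_biUnion] at hx
  obtain ⟨i, -, hx⟩ := hx
  simp only [DTree.attrs, Finset.mem_insert] at hx
  rcases hx with rfl | hx
  · exact Finset.mem_image_of_mem a (Finset.mem_univ _)
  · simp [DTree.attrs] at hx

lemma ktree_mem_sub_of_n_zero (Γ : KTree 2) (h : Γ.n = 0) (i : Fin (Γ.n + 1))
    {p : List (ℕ × ℕ) × ℕ} (hp : p ∈ Γ.paths) : p ∈ (Γ.sub i).paths := by
  obtain ⟨i', hi'⟩ := Set.mem_iUnion.1 hp
  have : i' = i := by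
    apply Fin.ext
    have h1 := i'.2
    have h2 := i.2
    omega
  rwa [this] at hi'

end AuxStmt17c
section AuxStmt17d

open Classical

lemma key_construction (A : Set (Table 2)) (hclosed : IsClosedClass A) (ψ : BCM)
    {n : ℕ} {T : Table 2} (hT : T ∈ A) (hmp : mpsi ψ.toPBCM T ≤ n)
    {α : List (ℕ × ℕ)} (hirr : isIrredAnnih T α) (hα : α ≠ []) :
    ∃ Q ∈ A, psiA ψ.toPBCM Q ≤ n ∧ α.length ≤ psiD ψ.toPBCM Q + 1 := by
  obtain ⟨⟨hwOk, hcons, hempty⟩, hmin⟩ := hirr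
  have hm0 : 0 < α.length := List.length_pos_iff.2 hα
  have hne : ∀ r ∈ T.rows, ¬ Table.rowSat r α := by
    intro r hr hs
    have hmem : r ∈ (T.applyWord α).rows := Finset.mem_filter.2 ⟨hr, hs⟩
    rw [hempty] at hmem
    exact absurd hmem (Finset.notMem_empty r)
  have hTrows : T.rows.Nonempty := by
    by_contra h
    rw [Finset.not_nonempty_iff_eq_empty] at h
    refine hmin [] (List.nil_sublist α) (fun hh => hα hh.symm) ?_
    refine ⟨fun q hq => absurd hq List.not_mem_nil,
      fun p hp => absurd hp List.not_mem_nil, ?_⟩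
    show T.rows.filter _ = ∅
    rw [h, Finset.filter_empty]
  -- the attributes of α are pairwise different
  have hnodup : (α.map Prod.fst).Nodup := by
    by_contra h
    obtain ⟨x, hx⟩ := List.exists_duplicate_iff_not_nodup.2 h
    obtain ⟨l', hl', hmap⟩ := List.sublist_map_iff.1 (List.duplicate_iff_sublist.1 hx)
    obtain ⟨q1, q2, rfl⟩ : ∃ q1 q2, l' = [q1, q2] := by
      rcases l' with _ | ⟨q1, _ | ⟨q2, _ | ⟨q3, l⟩⟩⟩
      · simpa using congrArg List.length hmap
      · simpa using congrArg List.length hmap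
      · exact ⟨q1, q2, rfl⟩
      · simpa using congrArg List.length hmap
    have hq1m : q1 ∈ α := hl'.subset (List.mem_cons_self)
    have hq2m : q2 ∈ α := hl'.subset (List.mem_cons_of_mem _ (List.mem_cons_self))
    have hx1 : q1.1 = x := by have h := hmap; simp at h; omega
    have hx2 : q2.1 = x := by have h := hmap; simp at h; omega
    have hq12 : q1 = q2 := Prod.ext (hx1.trans hx2.symm) (hcons q1 hq1m q2 hq2m (hx1.trans hx2.symm))
    rw [hq12] at hl'
    have hq2β : q2 ∈ α.erase q2 := by
      have h1 : [q2, q2].erase q2 = [q2] := by simp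
      have h2 := hl'.erase q2
      rw [h1] at h2
      exact List.singleton_sublist.1 h2
    refine hmin (α.erase q2) List.erase_sublist ?_ ?_
    · intro hEq
      have := List.length_erase_of_mem hq2m
      rw [hEq] at this
      omega
    · have hsub := List.erase_sublist (a := q2) (l := α)
      refine ⟨fun q hq => hwOk q (hsub.subset hq),
        fun p hp q hq hpq => hcons p (hsub.subset hp) q (hsub.subset hq) hpq, ?_⟩
      show T.rows.filter _ = ∅
      rw [Finset.filter_eq_empty_iff]
      intro r hr hs
      refine hne r hr ?_
      intro q hq
      by_cases hqq : q = q2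
      · subst hqq; exact hs q hq2β
      · exact hs q ((List.mem_erase_of_ne hqq).2 hq)
  have hget : ∀ q ∈ α, ∃ j : Fin α.length, α.get j = q := fun q hq => List.mem_iff_get.1 hq
  have hsubS : (α.map Prod.fst).toFinset ⊆ T.attrs := by
    intro x hx
    simp only [List.mem_toFinset, List.mem_map] at hx
    obtain ⟨q, hq, rfl⟩ := hx
    exact (hwOk q hq).1
  set Q := mkQ T α hsubS hne with hQ
  have hQA : Q ∈ A := hclosed T hT (mkQ_mem_closure T α hsubS hne)
  have hQattrs := mkQ_attrs T α hsubS hne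
  have hQrows := mkQ_rows T α hsubS hne
  have hQdec : Q.dec = fun r => (Finset.range α.length).filter fun i =>
      r (α.getD i (0,0)).1 ≠ (α.getD i (0,0)).2 := rfl
  have haS : ∀ j : Fin α.length, (α.get j).1 ∈ (α.map Prod.fst).toFinset := by
    intro j
    simp only [List.mem_toFinset, List.mem_map]
    exact ⟨α.get j, List.get_mem α j, rfl⟩
  have hvj2 : ∀ j : Fin α.length, (α.get j).2 < 2 := fun j => (hwOk _ (List.get_mem α j)).2
  have hainj : ∀ j j' : Fin α.length, (α.get j).1 = (α.get j').1 → j = j' := by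
    intro j j' h
    have hh : (α.map Prod.fst)[(j:ℕ)]'(by simp [j.2]) = (α.map Prod.fst)[(j':ℕ)]'(by simp [j'.2]) := by
      simpa [List.getElem_map] using h
    exact Fin.ext (hnodup.getElem_inj_iff.1 hh)
  -- the flip rows
  have hflipex : ∀ j : Fin α.length, ∃ r, r ∈ T.rows ∧ Table.rowSat r (α.eraseIdx (j:ℕ)) := by
    intro j
    have hsl : (α.eraseIdx (j:ℕ)).Sublist α := List.eraseIdx_sublist α j
    have hlen : (α.eraseIdx (j:ℕ)).length = α.length - 1 := by
      rw [List.length_eraseIdx]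
      simp [j.2]
    have hβne : α.eraseIdx (j:ℕ) ≠ α := by
      intro h
      rw [h] at hlen
      omega
    by_contra h
    push_neg at h
    refine hmin _ hsl hβne ⟨fun q hq => hwOk q (hsl.subset hq),
      fun p hp q hq hpq => hcons p (hsl.subset hp) q (hsl.subset hq) hpq, ?_⟩
    show T.rows.filter _ = ∅
    rw [Finset.filter_eq_empty_iff]
    exact fun r hr hs => h r hr hs
  choose flip hflipT hflipSat using hflipex
  have heraseMem : ∀ j i : Fin α.length, i ≠ j → α.get i ∈ α.eraseIdx (j:ℕ) := by
    intro j i hij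
    have hijn : (i:ℕ) ≠ (j:ℕ) := fun h => hij (Fin.ext h)
    have hlenE : (α.eraseIdx (j:ℕ)).length = α.length - 1 := by
      rw [List.length_eraseIdx]; simp [j.2]
    rcases lt_or_gt_of_ne hijn with h | h
    · have hlt : (i:ℕ) < (α.eraseIdx (j:ℕ)).length := by
        rw [hlenE]; have := j.2; omega
      have hEq := List.getElem_eraseIdx hlt
      rw [dif_pos h] at hEq
      exact List.mem_iff_getElem.2 ⟨(i:ℕ), hlt, by rw [hEq]; exact List.get_eq_getElem.symm⟩
    · have hlt : (i:ℕ) - 1 < (α.eraseIdx (j:ℕ)).length := by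
        rw [hlenE]; have := i.2; omega
      have hEq := List.getElem_eraseIdx hlt
      rw [dif_neg (by omega)] at hEq
      have hi1 : (i:ℕ) - 1 + 1 = (i:ℕ) := by omega
      exact List.mem_iff_getElem.2 ⟨(i:ℕ) - 1, hlt, by
        rw [hEq]; simp only [hi1]; exact List.get_eq_getElem.symm⟩
  have hK1 : ∀ j i : Fin α.length, i ≠ j → flip j (α.get i).1 = (α.get i).2 :=
    fun j i hij => hflipSat j _ (heraseMem j i hij)
  have hK2 : ∀ j : Fin α.length, flip j (α.get j).1 ≠ (α.get j).2 := by
    intro j h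
    refine hne (flip j) (hflipT j) ?_
    intro q hq
    obtain ⟨i, hi⟩ := hget q hq
    subst hi
    by_cases hij : i = j
    · subst hij; exact h
    · exact hK1 j i hij
  set qrow : Fin α.length → ℕ → ℕ :=
    fun j i => if i ∈ (α.map Prod.fst).toFinset then flip j i else 0 with hqrowdef
  have hqrowmem : ∀ j, qrow j ∈ Q.rows := by
    intro j
    rw [hQrows]
    exact Finset.mem_image_of_mem _ (hflipT j)
  have hSmem : ∀ x, x ∈ (α.map Prod.fst).toFinset ↔ ∃ i : Fin α.length, (α.get i).1 = x := by
    intro x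
    simp only [List.mem_toFinset, List.mem_map]
    constructor
    · rintro ⟨q, hq, rfl⟩
      obtain ⟨i, hi⟩ := hget q hq
      exact ⟨i, by rw [hi]⟩
    · rintro ⟨i, rfl⟩
      exact ⟨α.get i, List.get_mem α i, rfl⟩
  have hqval : ∀ j i : Fin α.length, i ≠ j → qrow j (α.get i).1 = (α.get i).2 := by
    intro j i hij
    show (if _ ∈ _ then _ else 0) = _
    rw [if_pos (haS i)]
    exact hK1 j i hij
  have hqvalj : ∀ j : Fin α.length, qrow j (α.get j).1 ≠ (α.get j).2 := by
    intro j
    show ¬ (if _ ∈ _ then _ else 0) = _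
    rw [if_pos (haS j)]
    exact hK2 j
  have hcoh : ∀ j j' : Fin α.length, ∀ x, x ≠ (α.get j).1 → x ≠ (α.get j').1 →
      qrow j x = qrow j' x := by
    intro j j' x hxj hxj'
    by_cases hx : x ∈ (α.map Prod.fst).toFinset
    · obtain ⟨i, hi⟩ := (hSmem x).1 hx
      have hij : i ≠ j := fun h => hxj (by rw [← hi, h])
      have hij' : i ≠ j' := fun h => hxj' (by rw [← hi, h])
      rw [← hi]
      rw [hqval j i hij, hqval j' i hij']
    · show (if _ ∈ _ then _ else 0) = (if _ ∈ _ then _ else 0)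
      rw [if_neg hx, if_neg hx]
  have hdecq : ∀ j : Fin α.length, Q.dec (qrow j) = {(j:ℕ)} := by
    intro j
    ext i
    rw [hQdec]
    simp only [Finset.mem_filter, Finset.mem_range, Finset.mem_singleton]
    constructor
    · rintro ⟨hi, hv⟩
      by_contra hnej
      have hii' : (⟨i, hi⟩ : Fin α.length) ≠ j := fun h => hnej (congrArg Fin.val h)
      refine hv ?_
      have hgd : α.getD i (0,0) = α.get ⟨i, hi⟩ := by
        rw [List.getD_eq_getElem _ _ hi, List.get_eq_getElem]
      rw [hgd]
      exact hqval j ⟨i, hi⟩ hii'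
    · rintro rfl
      refine ⟨j.2, ?_⟩
      have hgd : α.getD (j:ℕ) (0,0) = α.get j := by
        rw [List.getD_eq_getElem _ _ j.2, List.get_eq_getElem]
      rw [hgd]
      exact hqvalj j
  -- the nondeterministic upper bound
  have hpsiA : psiA ψ.toPBCM Q ≤ n := by
    set Γ₁ := oneTestTree hm0 (fun j => (α.get j).1) (fun j => (α.get j).2) with hΓ₁
    have hNDT : isNDT Q Γ₁ := by
      refine ⟨?_, oneTestTree_wf hm0 _ _, ?_, ?_, ?_⟩
      · rw [hQrows]
        exact hTrows.image _
      · refine (oneTestTree_attrs hm0 _ _).trans ?_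
        intro x hx
        obtain ⟨j, -, rfl⟩ := Finset.mem_image.1 hx
        rw [hQattrs]
        exact haS j
      · intro r hr
        rw [hQrows] at hr
        obtain ⟨r₀, hr₀, rfl⟩ := Finset.mem_image.1 hr
        have h := hne r₀ hr₀
        simp only [Table.rowSat, not_forall] at h
        obtain ⟨q, hq, hqv⟩ := h
        obtain ⟨j, hj⟩ := hget q hq
        subst hj
        refine ⟨([((α.get j).1, 1 - (α.get j).2)], (j:ℕ)),
          (oneTestTree_paths hm0 _ _ _).2 ⟨j, rfl⟩, ?_⟩
        intro x hx
        rw [List.mem_singleton] at hx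
        subst hx
        show (if _ ∈ _ then _ else 0) = _
        rw [if_pos (haS j)]
        show r₀ (α.get j).1 = 1 - (α.get j).2
        have h1 : r₀ (α.get j).1 < 2 :=
          (T.rows_mem r₀ hr₀).1 _ (hsubS (haS j))
        have h2 := hvj2 j
        omega
      · intro p hp
        obtain ⟨j, rfl⟩ := (oneTestTree_paths hm0 _ _ _).1 hp
        right
        intro r hr
        obtain ⟨hrQ, hrs⟩ := Finset.mem_filter.1 hr
        rw [hQdec]
        refine Finset.mem_filter.2 ⟨Finset.mem_range.2 j.2, ?_⟩
        have hgd : α.getD (j:ℕ) (0,0) = α.get j := by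
          rw [List.getD_eq_getElem _ _ j.2, List.get_eq_getElem]
        rw [hgd]
        have hv : r (α.get j).1 = 1 - (α.get j).2 := hrs _ (List.mem_singleton.2 rfl)
        have h2 := hvj2 j
        omega
    refine le_trans (Nat.sInf_le ⟨Γ₁, hNDT, rfl⟩) ?_
    -- treeComp Γ₁ ≤ n
    have hmpT : T.attrs.sup (fun i => ψ.toFun [i]) ≤ n := by
      unfold mpsi at hmp
      rwa [if_neg (Finset.nonempty_iff_ne_empty.1 hTrows)] at hmp
    refine csSup_le ⟨ψ.toPBCM.onWord [((α.get ⟨0, hm0⟩).1, 1 - (α.get ⟨0, hm0⟩).2)],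
      ([((α.get ⟨0, hm0⟩).1, 1 - (α.get ⟨0, hm0⟩).2)], ((⟨0, hm0⟩ : Fin α.length) : ℕ)),
      (oneTestTree_paths hm0 _ _ _).2 ⟨⟨0, hm0⟩, rfl⟩, rfl⟩ ?_
    rintro c ⟨p, hp, rfl⟩
    obtain ⟨j, rfl⟩ := (oneTestTree_paths hm0 _ _ _).1 hp
    show ψ.toFun ([((α.get j).1, 1 - (α.get j).2)].map Prod.fst) ≤ n
    simp only [List.map_cons, List.map_nil]
    exact le_trans (Finset.le_sup (f := fun i => ψ.toFun [i]) (hsubS (haS j))) hmpT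
  -- existence of a deterministic tree
  have hDDTex : ∃ Γ : KTree 2, isDDT Q Γ := by
    set dd : List (ℕ × ℕ) → ℕ := fun w =>
      if h : ∃ i, i < α.length ∧ ∃ q ∈ w, q.1 = (α.getD i (0,0)).1 ∧ q.2 ≠ (α.getD i (0,0)).2
      then h.choose else 0 with hdd
    refine ⟨⟨0, fun _ => buildT dd (α.map Prod.fst) []⟩,
      ⟨⟨?_, fun i => buildT_wf dd _ _, ?_, ?_, ?_⟩, rfl, fun i => buildT_det dd _ _⟩⟩
    · rw [hQrows]
      exact hTrows.image _
    · intro x hx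
      simp only [KTree.attrs, Finset.mem_biUnion] at hx
      obtain ⟨i, -, hx⟩ := hx
      rw [hQattrs]
      exact buildT_attrs dd _ _ hx
    · -- coverage
      intro r hr
      have hb : ∀ b ∈ α.map Prod.fst, r b < 2 := by
        intro b hb
        exact (Q.rows_mem r hr).1 b (by rw [hQattrs]; exact List.mem_toFinset.2 hb)
      refine ⟨((α.map Prod.fst).map fun b => (b, r b),
        dd ([] ++ (α.map Prod.fst).map fun b => (b, r b))),
        Set.mem_iUnion.2 ⟨0, buildT_cover dd _ [] r hb⟩, ?_⟩
      intro q hq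
      obtain ⟨b, hb', rfl⟩ := List.mem_map.1 hq
      rfl
    · -- decisions
      intro p hp
      obtain ⟨i, hi⟩ := Set.mem_iUnion.1 hp
      obtain ⟨hmap, hp2⟩ := buildT_paths dd (α.map Prod.fst) [] p hi
      by_cases hrows : (Q.applyWord p.1).rows = ∅
      · exact Or.inl hrows
      right
      intro r hr
      obtain ⟨hrQ, hrs⟩ := Finset.mem_filter.1 hr
      obtain ⟨i₀, hi₀⟩ := Q.dec_nonempty r hrQ
      obtain ⟨hi₀r, hi₀v⟩ := Finset.mem_filter.1 hi₀
      rw [Finset.mem_range] at hi₀r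
      have hP : ∃ i', i' < α.length ∧ ∃ q ∈ p.1,
          q.1 = (α.getD i' (0,0)).1 ∧ q.2 ≠ (α.getD i' (0,0)).2 := by
        refine ⟨i₀, hi₀r, ?_⟩
        have hmem : (α.getD i₀ (0,0)).1 ∈ p.1.map Prod.fst := by
          rw [hmap, List.getD_eq_getElem _ _ hi₀r]
          exact List.mem_map.2 ⟨α[i₀], List.getElem_mem hi₀r, rfl⟩
        obtain ⟨q, hq, hq1⟩ := List.mem_map.1 hmem
        refine ⟨q, hq, hq1, ?_⟩
        rw [← hrs q hq, hq1]
        exact hi₀v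
      rw [hp2, List.nil_append]
      show (if h : _ then _ else 0) ∈ Q.dec r
      rw [dif_pos hP]
      obtain ⟨hc1, q, hq, hq1, hq2⟩ := hP.choose_spec
      refine Finset.mem_filter.2 ⟨Finset.mem_range.2 hc1, ?_⟩
      rw [← hq1, hrs q hq]
      exact hq2
  -- the deterministic lower bound
  have hDDTlow : ∀ Γ : KTree 2, isDDT Q Γ → α.length ≤ treeComp ψ.toPBCM Γ + 1 := by
    rintro Γ ⟨⟨hrne, hwf, hat, hcov, hdec5⟩, hn0, hdet⟩
    have i₀ : Fin (Γ.n + 1) := ⟨0, Nat.succ_pos _⟩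
    have hsat : ∀ j ∈ (Finset.univ : Finset (Fin α.length)),
        ∃ w, (w, ((j:ℕ))) ∈ (Γ.sub i₀).paths ∧ Table.rowSat (qrow j) w := by
      intro j _
      obtain ⟨p, hp, hsatp⟩ := hcov (qrow j) (hqrowmem j)
      have hqmem : qrow j ∈ (Q.applyWord p.1).rows :=
        Finset.mem_filter.2 ⟨hqrowmem j, hsatp⟩
      rcases hdec5 p hp with hemp | hcomm
      · rw [hemp] at hqmem
        exact absurd hqmem (Finset.notMem_empty _)
      · have hmem2 := hcomm _ hqmem
        rw [hdecq j] at hmem2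
        have hp2 : p.2 = (j:ℕ) := Finset.mem_singleton.1 hmem2
        refine ⟨p.1, ?_, hsatp⟩
        rw [← hp2]
        exact ktree_mem_sub_of_n_zero Γ hn0 i₀ hp
    obtain ⟨p, hp, hcard⟩ := det_card_le (Γ.sub i₀) Finset.univ qrow
      (fun j => (α.get j).1) (fun j => (j:ℕ))
      (fun j _ j' _ h => hainj j j' h)
      (fun j _ j' _ h => Fin.ext h)
      (fun j _ j' _ x h1 h2 => hcoh j j' x h1 h2)
      (hdet i₀) hsat
    rw [Finset.card_univ, Fintype.card_fin] at hcard
    have h1 : p.1.length ≤ ψ.toPBCM.onWord p.1 := by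
      have hb := ψ.bdd (p.1.map Prod.fst)
      rwa [List.length_map] at hb
    have h2 : ψ.toPBCM.onWord p.1 ≤ treeComp ψ.toPBCM Γ := by
      have hset : {c | ∃ p ∈ Γ.paths, ψ.toPBCM.onWord p.1 = c} =
          (fun p : List (ℕ × ℕ) × ℕ => ψ.toPBCM.onWord p.1) '' Γ.paths := by
        ext c
        simp [Set.mem_image]
      refine le_csSup ?_ ⟨p, Set.mem_iUnion.2 ⟨i₀, hp⟩, rfl⟩
      rw [hset]
      exact ((ktree_paths_finite Γ).image _).bddAbove
    omega
  refine ⟨Q, hQA, hpsiA, ?_⟩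
  have hDne : {c | ∃ Γ : KTree 2, isDDT Q Γ ∧ treeComp ψ.toPBCM Γ = c}.Nonempty := by
    obtain ⟨Γ, hΓ⟩ := hDDTex
    exact ⟨treeComp ψ.toPBCM Γ, Γ, hΓ, rfl⟩
  obtain ⟨Γ, hΓ, hEq⟩ := Nat.sInf_mem hDne
  have := hDDTlow Γ hΓ
  show α.length ≤ sInf _ + 1
  omega

end AuxStmt17d
/-- **Lemma (7M11).** If `G_{ψ,A}` is not everywhere defined, then `H^∞_{ψ,A}` is not
everywhere defined. -/
theorem stmt17 (A : Set (Table 2)) (hclosed : IsClosedClass A)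
    (hnontriv : NontrivialClass A) (ψ : BCM)
    (hG : ¬ ∀ n, (GSet ψ.toPBCM A n).Finite) :
    ¬ ∀ n, (HSet ψ.toPBCM A n).Finite := by
  intro hH
  push_neg at hG
  obtain ⟨n, hGn⟩ := hG
  have hInf : (GSet ψ.toPBCM A n).Infinite := hGn
  obtain ⟨B, hB⟩ := (hH n).bddAbove
  obtain ⟨c, hc, hcb⟩ := hInf.exists_gt (B + 1)
  obtain ⟨T, hTA, hmp, hGt⟩ := hc
  set Sg := {k | ∃ α, isIrredAnnih T α ∧ α.length = k} with hSg
  have hGtdef : sSup Sg = c := hGt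
  have hSgne : Sg.Nonempty := by
    by_contra h
    rw [Set.not_nonempty_iff_eq_empty] at h
    rw [h, csSup_empty] at hGtdef
    simp only [Nat.bot_eq_zero] at hGtdef
    omega
  have hSgbdd : BddAbove Sg := by
    by_contra h
    rw [csSup_of_not_bddAbove h, csSup_empty] at hGtdef
    simp only [Nat.bot_eq_zero] at hGtdef
    omega
  have hmem := Nat.sSup_mem hSgne hSgbdd
  rw [hGtdef] at hmem
  obtain ⟨α, hirr, hlen⟩ := hmem
  have hαne : α ≠ [] := by
    intro h
    rw [h] at hlen
    simp at hlen
    omega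
  obtain ⟨Q, hQA, h1, h2⟩ := key_construction A hclosed ψ hTA hmp hirr hαne
  have hQH : psiD ψ.toPBCM Q ∈ HSet ψ.toPBCM A n := ⟨Q, hQA, h1, rfl⟩
  have := hB hQH
  omega
end
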